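/- arXiv:1403.6696 — 7 statements merged into one kernel-verified Lean document; each statement's English description precedes it below -/
import Mathlib

section
/- Let n ≥ 5 be an integer, a ∈ ℂ, and b ∈ ℂ with b ≠ 0, and let A be the associated n×n tridiagonal matrix. For every k with 1 ≤ k ≤ n, the number λ_k = a + 2b·cos((k−1)π/(n−1)) is an eigenvalue of A, i.e. det(λ_k·I_n − A) = 0. -/
/-- The `n × n` complex tridiagonal matrix `A` (1-based indices): `A_{j,j} = a`,
`A_{1,2} = 2b`, `A_{2,1} = b`, `A_{n-1,n} = b`, `A_{n,n-1} = 2b`,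
`A_{j,j+1} = A_{j+1,j} = -b` for `2 ≤ j ≤ n-2`, all other entries `0`. -/
def matA (n : ℕ) (a b : ℂ) : Matrix (Fin n) (Fin n) ℂ :=
  Matrix.of fun i j =>
    let i' := (i : ℕ) + 1
    let j' := (j : ℕ) + 1
    if i' = j' then a
    else if i' = 1 ∧ j' = 2 then 2 * b
    else if i' = 2 ∧ j' = 1 then b
    else if i' = n - 1 ∧ j' = n then b
    else if i' = n ∧ j' = n - 1 then 2 * b
    else if (i' + 1 = j' ∨ j' + 1 = i') ∧ 2 ≤ min i' j' ∧ min i' j' ≤ n - 2 then -b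
    else 0



open Finset in
lemma sum_range_eq_three {M : Type*} [AddCommMonoid M] {n p q r : ℕ} (F : ℕ → M)
    (hpq : p < q) (hqr : q < r) (hrn : r < n)
    (h0 : ∀ l, l < n → l ≠ p → l ≠ q → l ≠ r → F l = 0) :
    ∑ l ∈ range n, F l = F p + F q + F r := by
  have hsub : ({p, q, r} : Finset ℕ) ⊆ range n := by
    intro x hx
    simp only [mem_insert, mem_singleton] at hx
    simp only [mem_range]
    rcases hx with h | h | h <;> omega
  rw [← Finset.sum_subset hsub]
  · rw [show ({p, q, r} : Finset ℕ) = insert p (insert q {r}) from rfl,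
      Finset.sum_insert (by simp; omega), Finset.sum_insert (by simp; omega),
      Finset.sum_singleton, add_assoc]
  · intro x hx hxn
    simp only [mem_insert, mem_singleton, not_or] at hxn
    exact h0 x (mem_range.mp hx) hxn.1 hxn.2.1 hxn.2.2

open Finset in
lemma sum_range_eq_two {M : Type*} [AddCommMonoid M] {n p q : ℕ} (F : ℕ → M)
    (hpq : p < q) (hqn : q < n)
    (h0 : ∀ l, l < n → l ≠ p → l ≠ q → F l = 0) :
    ∑ l ∈ range n, F l = F p + F q := by
  have hsub : ({p, q} : Finset ℕ) ⊆ range n := by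
    intro x hx
    simp only [mem_insert, mem_singleton] at hx
    simp only [mem_range]
    rcases hx with h | h <;> omega
  rw [← Finset.sum_subset hsub]
  · rw [show ({p, q} : Finset ℕ) = insert p {q} from rfl,
      Finset.sum_insert (by simp; omega), Finset.sum_singleton]
  · intro x hx hxn
    simp only [mem_insert, mem_singleton, not_or] at hxn
    exact h0 x (mem_range.mp hx) hxn.1 hxn.2

lemma cosRec (θ x : ℝ) : Real.cos (x + θ) + Real.cos (x - θ) = 2 * Real.cos θ * Real.cos x := by
  rw [Real.cos_add, Real.cos_sub]; ring

lemma cos_nat_pi (m : ℕ) : Real.cos (m * Real.pi) = (-1) ^ m := by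
  have := Real.cos_nat_mul_pi_sub 0 m
  simpa using this

/-- The angle `θ = (k-1)π/(n-1)` with `n = s+5`. -/
noncomputable def thet (s k : ℕ) : ℝ := ((k : ℝ) - 1) * Real.pi / ((s : ℝ) + 4)

/-- Natural-number indexed version of the entries of `λ•1 - matA (s+5) a b`. -/
noncomputable def GG (s k : ℕ) (a b : ℂ) (m l : ℕ) : ℂ :=
  (if m = l then a + 2 * b * (Real.cos (thet s k) : ℂ) else 0) -
  (let i' := m + 1
   let j' := l + 1
   let n := s + 5
   if i' = j' then a
   else if i' = 1 ∧ j' = 2 then 2 * b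
   else if i' = 2 ∧ j' = 1 then b
   else if i' = n - 1 ∧ j' = n then b
   else if i' = n ∧ j' = n - 1 then 2 * b
   else if (i' + 1 = j' ∨ j' + 1 = i') ∧ 2 ≤ min i' j' ∧ min i' j' ≤ n - 2 then -b
   else 0)

/-- The eigenvector entries. -/
noncomputable def VV (s k : ℕ) (l : ℕ) : ℂ :=
  (-1 : ℂ) ^ (l + 1) * (if l = 0 ∨ l = s + 4 then -1 else 1) *
    (Real.cos ((l : ℝ) * thet s k) : ℂ)

lemma GG_eq_zero (s k : ℕ) (a b : ℂ) {m l : ℕ} (h1 : l + 1 ≠ m) (h2 : m ≠ l)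
    (h3 : m + 1 ≠ l) : GG s k a b m l = 0 := by
  simp only [GG, Nat.min_def]
  split_ifs <;> first | ring1 | (exfalso; omega) | (exfalso; simp_all <;> omega)

lemma GG_diag (s k : ℕ) (a b : ℂ) (m : ℕ) :
    GG s k a b m m = 2 * b * (Real.cos (thet s k) : ℂ) := by
  simp only [GG, Nat.min_def]
  split_ifs <;> first | ring1 | (exfalso; omega) | (exfalso; simp_all <;> omega)

lemma VV_zero (s k : ℕ) : VV s k 0 = 1 := by
  simp [VV]

lemma VV_mid (s k l : ℕ) (h1 : 1 ≤ l) (h2 : l ≤ s + 3) :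
    VV s k l = (-1 : ℂ) ^ (l + 1) * (Real.cos ((l : ℝ) * thet s k) : ℂ) := by
  simp only [VV]
  rw [if_neg (by omega), mul_one]

lemma VV_last (s k : ℕ) :
    VV s k (s + 4) = (-1 : ℂ) ^ (s + 4) * (Real.cos (((s : ℝ) + 4) * thet s k) : ℂ) := by
  simp only [VV, or_true, if_true]
  push_cast
  ring

lemma thet_mul (s k : ℕ) : ((s : ℝ) + 4) * thet s k = ((k : ℝ) - 1) * Real.pi := by
  unfold thet
  field_simp

lemma cosN (s k : ℕ) (hk : 1 ≤ k) :
    Real.cos (((s : ℝ) + 4) * thet s k) = (-1 : ℝ) ^ (k - 1) := by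
  rw [thet_mul, show ((k : ℝ) - 1) = ((k - 1 : ℕ) : ℝ) by
    rw [Nat.cast_sub hk, Nat.cast_one], cos_nat_pi]

lemma sinN (s k : ℕ) (hk : 1 ≤ k) :
    Real.sin (((s : ℝ) + 4) * thet s k) = 0 := by
  rw [thet_mul, show ((k : ℝ) - 1) = ((k - 1 : ℕ) : ℝ) by
    rw [Nat.cast_sub hk, Nat.cast_one], Real.sin_nat_mul_pi]

lemma cosN1 (s k : ℕ) (hk : 1 ≤ k) :
    Real.cos (((s : ℝ) + 3) * thet s k) = (-1 : ℝ) ^ (k - 1) * Real.cos (thet s k) := by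
  have h : ((s : ℝ) + 3) * thet s k = ((s : ℝ) + 4) * thet s k - thet s k := by ring
  rw [h, Real.cos_sub, cosN s k hk, sinN s k hk]
  ring

/-- Complex-coefficient version of the recurrence. -/
lemma cosRecC (θ x : ℝ) :
    ((Real.cos (x + θ) : ℝ) : ℂ) + ((Real.cos (x - θ) : ℝ) : ℂ)
      = 2 * ((Real.cos θ : ℝ) : ℂ) * ((Real.cos x : ℝ) : ℂ) := by
  exact_mod_cast cosRec θ x


lemma GG01 (s k : ℕ) (a b : ℂ) : GG s k a b 0 1 = -(2*b) := by simp only [GG, Nat.min_def]; split_ifs <;> first | ring1 | (exfalso; omega) | (exfalso; simp_all <;> omega)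

lemma GG10 (s k : ℕ) (a b : ℂ) : GG s k a b 1 0 = -b := by simp only [GG, Nat.min_def]; split_ifs <;> first | ring1 | (exfalso; omega) | (exfalso; simp_all <;> omega)

lemma GG12 (s k : ℕ) (a b : ℂ) : GG s k a b 1 2 = b := by simp only [GG, Nat.min_def]; split_ifs <;> first | ring1 | (exfalso; omega) | (exfalso; simp_all <;> omega)

lemma GGmidL (s k : ℕ) (a b : ℂ) (t : ℕ) (ht : t ≤ s) : GG s k a b (t+2) (t+1) = b := by simp only [GG, Nat.min_def]; split_ifs <;> first | ring1 | (exfalso; omega) | (exfalso; simp_all <;> omega)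

lemma GGmidR (s k : ℕ) (a b : ℂ) (t : ℕ) (ht : t ≤ s) : GG s k a b (t+2) (t+3) = b := by simp only [GG, Nat.min_def]; split_ifs <;> first | ring1 | (exfalso; omega) | (exfalso; simp_all <;> omega)

lemma GGn2L (s k : ℕ) (a b : ℂ) : GG s k a b (s+3) (s+2) = b := by simp only [GG, Nat.min_def]; split_ifs <;> first | ring1 | (exfalso; omega) | (exfalso; simp_all <;> omega)

lemma GGn2R (s k : ℕ) (a b : ℂ) : GG s k a b (s+3) (s+4) = -b := by simp only [GG, Nat.min_def]; split_ifs <;> first | ring1 | (exfalso; omega) | (exfalso; simp_all <;> omega)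

lemma GGn1 (s k : ℕ) (a b : ℂ) : GG s k a b (s+4) (s+3) = -(2*b) := by simp only [GG, Nat.min_def]; split_ifs <;> first | ring1 | (exfalso; omega) | (exfalso; simp_all <;> omega)

lemma row0 (s k : ℕ) (a b : ℂ) :
    ∑ l ∈ Finset.range (s + 5), GG s k a b 0 l * VV s k l = 0 := by
  rw [sum_range_eq_two _ (show 0 < 1 by omega) (by omega)
    (fun l hl h0 h1 => by rw [GG_eq_zero s k a b (by omega) (by omega) (by omega), zero_mul])]
  rw [GG_diag, VV_zero, VV_mid s k 1 (by omega) (by omega), GG01]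
  push_cast
  simp only [one_mul, Complex.cos_zero]
  ring

lemma row1 (s k : ℕ) (a b : ℂ) :
    ∑ l ∈ Finset.range (s + 5), GG s k a b 1 l * VV s k l = 0 := by
  rw [sum_range_eq_three _ (show 0 < 1 by omega) (show 1 < 2 by omega) (by omega)
    (fun l hl h0 h1 h2 => by
      rw [GG_eq_zero s k a b (by omega) (by omega) (by omega), zero_mul])]
  rw [GG_diag, VV_zero, VV_mid s k 1 (by omega) (by omega), VV_mid s k 2 (by omega) (by omega),
    GG10, GG12]
  have h := cosRecC (thet s k) (thet s k)
  rw [show thet s k + thet s k = (2:ℝ) * thet s k by ring,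
    show thet s k - thet s k = (0:ℝ) * thet s k by ring] at h
  push_cast at h ⊢
  simp only [one_mul, zero_mul, Complex.cos_zero] at h ⊢
  linear_combination (-b) * h

lemma rowMid (s k : ℕ) (a b : ℂ) (t : ℕ) (ht : t ≤ s) :
    ∑ l ∈ Finset.range (s + 5), GG s k a b (t + 2) l * VV s k l = 0 := by
  rw [sum_range_eq_three _ (show t + 1 < t + 2 by omega) (show t + 2 < t + 3 by omega)
    (by omega)
    (fun l hl h0 h1 h2 => by
      rw [GG_eq_zero s k a b (by omega) (by omega) (by omega), zero_mul])]
  rw [GG_diag, VV_mid s k (t+1) (by omega) (by omega), VV_mid s k (t+2) (by omega) (by omega),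
    VV_mid s k (t+3) (by omega) (by omega), GGmidL s k a b t ht, GGmidR s k a b t ht]
  have h := cosRecC (thet s k) (((t:ℝ) + 2) * thet s k)
  rw [show ((t:ℝ) + 2) * thet s k + thet s k = ((t:ℝ) + 3) * thet s k by ring,
    show ((t:ℝ) + 2) * thet s k - thet s k = ((t:ℝ) + 1) * thet s k by ring] at h
  push_cast at h ⊢
  linear_combination ((-1 : ℂ)) ^ (t + 2) * b * h

lemma rowN2 (s k : ℕ) (a b : ℂ) :
    ∑ l ∈ Finset.range (s + 5), GG s k a b (s + 3) l * VV s k l = 0 := by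
  rw [sum_range_eq_three _ (show s + 2 < s + 3 by omega) (show s + 3 < s + 4 by omega)
    (by omega)
    (fun l hl h0 h1 h2 => by
      rw [GG_eq_zero s k a b (by omega) (by omega) (by omega), zero_mul])]
  rw [GG_diag, VV_mid s k (s+2) (by omega) (by omega), VV_mid s k (s+3) (by omega) (by omega),
    VV_last, GGn2L, GGn2R]
  have h := cosRecC (thet s k) (((s:ℝ) + 3) * thet s k)
  rw [show ((s:ℝ) + 3) * thet s k + thet s k = ((s:ℝ) + 4) * thet s k by ring,
    show ((s:ℝ) + 3) * thet s k - thet s k = ((s:ℝ) + 2) * thet s k by ring] at h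
  push_cast at h ⊢
  linear_combination ((-1 : ℂ)) ^ (s + 3) * b * h

lemma rowN1 (s k : ℕ) (hk : 1 ≤ k) (a b : ℂ) :
    ∑ l ∈ Finset.range (s + 5), GG s k a b (s + 4) l * VV s k l = 0 := by
  rw [sum_range_eq_two _ (show s + 3 < s + 4 by omega) (by omega)
    (fun l hl h0 h1 => by
      rw [GG_eq_zero s k a b (by omega) (by omega) (by omega), zero_mul])]
  rw [GG_diag, VV_mid s k (s+3) (by omega) (by omega), VV_last, GGn1]
  have h3 : ((Real.cos (((s:ℝ) + 3) * thet s k) : ℝ) : ℂ)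
      = (-1 : ℂ) ^ (k - 1) * ((Real.cos (thet s k) : ℝ) : ℂ) := by
    rw [cosN1 s k hk]; push_cast; ring
  have h4 : ((Real.cos (((s:ℝ) + 4) * thet s k) : ℝ) : ℂ) = (-1 : ℂ) ^ (k - 1) := by
    rw [cosN s k hk]; push_cast; ring
  push_cast at h3 h4 ⊢
  linear_combination ((-1 : ℂ)) ^ (s + 4) * (-(2*b)) * h3
    + ((-1 : ℂ)) ^ (s + 4) * (2 * b * Complex.cos ((thet s k : ℂ))) * h4

lemma row_sum (s k : ℕ) (hk : 1 ≤ k) (a b : ℂ) (m : ℕ) (hm : m < s + 5) :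
    ∑ l ∈ Finset.range (s + 5), GG s k a b m l * VV s k l = 0 := by
  rcases (show m = 0 ∨ m = 1 ∨ (2 ≤ m ∧ m ≤ s + 2) ∨ m = s + 3 ∨ m = s + 4 by omega)
    with h | h | ⟨h2, h3⟩ | h | h
  · subst h; exact row0 s k a b
  · subst h; exact row1 s k a b
  · obtain ⟨t, rfl⟩ : ∃ t, m = t + 2 := ⟨m - 2, by omega⟩
    exact rowMid s k a b t (by omega)
  · subst h; exact rowN2 s k a b
  · subst h; exact rowN1 s k hk a b


/-- For `n ≥ 5`, `a b : ℂ` with `b ≠ 0`, each `λ_k = a + 2b·cos((k-1)π/(n-1))`,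
`1 ≤ k ≤ n`, is an eigenvalue of `A`: `det(λ_k·I - A) = 0`. -/
theorem eigenvalue_matA (n : ℕ) (hn : 5 ≤ n) (a b : ℂ) (hb : b ≠ 0)
    (k : ℕ) (hk1 : 1 ≤ k) (hkn : k ≤ n) :
    Matrix.det
      ((a + 2 * b * (Real.cos (((k : ℝ) - 1) * Real.pi / ((n : ℝ) - 1)) : ℂ)) •
          (1 : Matrix (Fin n) (Fin n) ℂ) - matA n a b) = 0 := by
  obtain ⟨s, rfl⟩ : ∃ s, n = s + 5 := ⟨n - 5, by omega⟩
  rw [show (((k : ℝ) - 1) * Real.pi / (((s + 5 : ℕ) : ℝ) - 1)) = thet s k by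
    unfold thet; push_cast; ring]
  rw [← Matrix.exists_mulVec_eq_zero_iff]
  refine ⟨fun j => VV s k (j : ℕ), ?_, ?_⟩
  · intro hv
    have h0 := congrFun hv (⟨0, by omega⟩ : Fin (s + 5))
    rw [show ((⟨0, by omega⟩ : Fin (s + 5)) : ℕ) = 0 from rfl] at h0
    rw [VV_zero] at h0
    exact one_ne_zero h0
  · funext i
    have hM : ∀ j : Fin (s + 5),
        ((a + 2 * b * (Real.cos (thet s k) : ℂ)) • (1 : Matrix (Fin (s+5)) (Fin (s+5)) ℂ)
          - matA (s + 5) a b) i j = GG s k a b (i : ℕ) (j : ℕ) := by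
      intro j
      simp only [Matrix.sub_apply, Matrix.smul_apply, Matrix.one_apply, smul_eq_mul,
        mul_ite, mul_one, mul_zero, matA, Matrix.of_apply, GG, Fin.ext_iff]
    simp only [Matrix.mulVec, dotProduct, Pi.zero_apply]
    rw [Finset.sum_congr rfl (fun j _ => by rw [hM j])]
    rw [Fin.sum_univ_eq_sum_range (fun l => GG s k a b (i : ℕ) l * VV s k l) (s + 5)]
    exact row_sum s k hk1 a b (i : ℕ) i.isLt
end

section
/- Let n ≥ 5 be an integer, a ∈ ℂ, and b ∈ ℂ with b ≠ 0, and let A† be the associated n×n tridiagonal matrix. For every k with 1 ≤ k ≤ n, the number λ†_k = a − 2b·cos(kπ/n) is an eigenvalue of A†, i.e. det(λ†_k·I_n − A†) = 0. -/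
/-- The `n × n` complex tridiagonal matrix `A†` (1-based indices): `A†_{1,1} = A†_{n,n} = a + b`,
`A†_{j,j} = a` for `2 ≤ j ≤ n-1`, `A†_{1,2} = A†_{2,1} = b`, `A†_{n-1,n} = A†_{n,n-1} = b`,
`A†_{j,j+1} = A†_{j+1,j} = -b` for `2 ≤ j ≤ n-2`, all other entries `0`. -/
def matAdag (n : ℕ) (a b : ℂ) : Matrix (Fin n) (Fin n) ℂ :=
  Matrix.of fun i j =>
    let i' := (i : ℕ) + 1
    let j' := (j : ℕ) + 1
    if i' = j' then (if i' = 1 ∨ i' = n then a + b else a)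
    else if (i' = 1 ∧ j' = 2) ∨ (i' = 2 ∧ j' = 1) ∨ (i' = n - 1 ∧ j' = n) ∨ (i' = n ∧ j' = n - 1) then b
    else if (i' + 1 = j' ∨ j' + 1 = i') ∧ 2 ≤ min i' j' ∧ min i' j' ≤ n - 2 then -b
    else 0

/-- Sign pattern used to conjugate away the sign differences in `A†`. -/
noncomputable def dsgn (n p : ℕ) : ℂ := if p = 0 ∨ p = n - 1 then (-1)^p else (-1)^(p+1)

lemma sgn_same (b : ℂ) (t : ℕ) : b * (-1)^t * (-1)^t = b := by
  rw [mul_assoc, ← pow_add, Even.neg_one_pow ⟨t, rfl⟩, mul_one]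

lemma sgn_succ (b : ℂ) (t : ℕ) : b * (-1)^t * (-1)^(t+1) = -b := by
  rw [mul_assoc, ← pow_add, Odd.neg_one_pow ⟨t, by ring⟩, mul_neg_one]

lemma dsgn_sq (n p : ℕ) : dsgn n p * dsgn n p = 1 := by
  unfold dsgn; split_ifs <;> · rw [← pow_add]; exact Even.neg_one_pow ⟨_, rfl⟩

/-- Row decomposition of `A†`: diagonal plus super- and sub-diagonal parts, with the
off-diagonal entry between positions `p` and `p+1` equal to `b · dsgn p · dsgn (p+1)`. -/
lemma rowFormula (n : ℕ) (hn : 5 ≤ n) (a b : ℂ) (r c : Fin n) :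
    matAdag n a b r c =
      (if (c:ℕ) = (r:ℕ) then (if (r:ℕ) = 0 ∨ (r:ℕ) = n - 1 then a + b else a) else 0)
      + (if (c:ℕ) = (r:ℕ) + 1 then b * dsgn n r * dsgn n ((r:ℕ)+1) else 0)
      + (if (c:ℕ) + 1 = (r:ℕ) then b * dsgn n c * dsgn n ((c:ℕ)+1) else 0) := by
  obtain ⟨r, hr⟩ := r; obtain ⟨c, hc⟩ := c
  simp only [matAdag, Matrix.of_apply, dsgn]
  split_ifs <;> try omega
  all_goals try (ring_nf; done)
  all_goals simp only [false_or] at *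
  all_goals try omega
  all_goals try casesm* _ ∨ _
  all_goals try omega
  all_goals simp_all [sgn_same, sgn_succ]

lemma sum_if {n : ℕ} (t : ℕ) (ht : t < n) (f : Fin n → ℂ) :
    (∑ i : Fin n, if (i : ℕ) = t then f i else 0) = f ⟨t, ht⟩ := by
  rw [Finset.sum_eq_single ⟨t, ht⟩]
  · rw [if_pos rfl]
  · intro i _ hne
    exact if_neg fun h => hne (Fin.ext h)
  · intro h; exact absurd (Finset.mem_univ _) h

/-- For `n ≥ 5`, `a b : ℂ` with `b ≠ 0`, each `λ†_k = a - 2b·cos(kπ/n)`,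
`1 ≤ k ≤ n`, is an eigenvalue of `A†`: `det(λ†_k·I - A†) = 0`. -/
theorem eigenvalue_matAdag (n : ℕ) (hn : 5 ≤ n) (a b : ℂ) (hb : b ≠ 0)
    (k : ℕ) (hk1 : 1 ≤ k) (hkn : k ≤ n) :
    Matrix.det
      ((a - 2 * b * (Real.cos ((k : ℝ) * Real.pi / (n : ℝ)) : ℂ)) •
          (1 : Matrix (Fin n) (Fin n) ℂ) - matAdag n a b) = 0 := by
  have hn5 : (5:ℝ) ≤ n := by exact_mod_cast hn
  have hn0 : (0:ℝ) < n := by linarith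
  set m : ℕ := n - k with hm
  set θ : ℝ := (m : ℝ) * Real.pi / n with hθ
  have hπ := Real.pi_pos
  -- the eigenvalue, rewritten
  have hkθ : (k : ℝ) * Real.pi / n = Real.pi - θ := by
    have hk : ((m:ℕ) : ℝ) = (n : ℝ) - k := by
      rw [hm, Nat.cast_sub hkn]
    rw [hθ, hk]; field_simp; ring
  have hcosk : (Real.cos ((k : ℝ) * Real.pi / n) : ℝ) = - Real.cos θ := by
    rw [hkθ, Real.cos_pi_sub]
  set lam : ℂ := a - 2 * b * (Real.cos ((k : ℝ) * Real.pi / (n : ℝ)) : ℂ) with hlamdef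
  have hlam : lam = a + 2 * b * ((Real.cos θ : ℝ) : ℂ) := by
    rw [hlamdef, hcosk]; push_cast; ring
  -- real/complex cosine sequence
  set w : ℕ → ℝ := fun p => Real.cos (((p:ℝ) + 1/2) * θ) with hw
  set W : ℕ → ℂ := fun p => ((w p : ℝ) : ℂ) with hW
  -- general product-to-sum identity
  have hgen : ∀ x : ℝ, Real.cos (x + θ) + Real.cos (x - θ) = 2 * Real.cos θ * Real.cos x := by
    intro x; rw [Real.cos_add, Real.cos_sub]; ring
  have hkey : Real.cos (θ/2 + θ) + Real.cos (θ/2) = 2 * Real.cos θ * Real.cos (θ/2) := by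
    have := hgen (θ/2)
    rwa [show θ/2 - θ = -(θ/2) by ring, Real.cos_neg] at this
  have hleft : w 1 + w 0 = 2 * Real.cos θ * w 0 := by
    rw [hw]; push_cast
    rw [show ((1:ℝ) + 1/2) * θ = θ/2 + θ by ring, show ((0:ℝ) + 1/2) * θ = θ/2 by ring]
    exact hkey
  have hmid : ∀ p : ℕ, w p + w (p+2) = 2 * Real.cos θ * w (p+1) := by
    intro p; rw [hw]; push_cast
    rw [show ((p:ℝ) + 2 + 1/2) * θ = (((p:ℝ) + 1 + 1/2) * θ) + θ by ring,
        show ((p:ℝ) + 1/2) * θ = (((p:ℝ) + 1 + 1/2) * θ) - θ by ring]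
    rw [add_comm]; exact hgen _
  have hsin : Real.sin ((m:ℝ) * Real.pi) = 0 := Real.sin_nat_mul_pi m
  have hright : w (n-2) + w (n-1) = 2 * Real.cos θ * w (n-1) := by
    have h1 : ((((n-1:ℕ)):ℝ) + 1/2) * θ = (m:ℝ) * Real.pi - θ/2 := by
      rw [Nat.cast_sub (by omega), hθ]; field_simp; ring
    have h2 : ((((n-2:ℕ)):ℝ) + 1/2) * θ = (m:ℝ) * Real.pi - (θ/2 + θ) := by
      rw [Nat.cast_sub (by omega), hθ]; field_simp; ring
    rw [hw]; simp only
    rw [h1, h2, Real.cos_sub, Real.cos_sub, hsin]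
    linear_combination Real.cos ((m:ℝ) * Real.pi) * hkey
  -- complex versions
  have hcast : ∀ p q r : ℕ, w p + w q = 2 * Real.cos θ * w r →
      W p + W q = 2 * ((Real.cos θ : ℝ) : ℂ) * W r := by
    intro p q r h
    simp only [hW]
    exact_mod_cast congrArg (Complex.ofReal) h
  have hleftC : W 1 + W 0 = 2 * ((Real.cos θ : ℝ) : ℂ) * W 0 := hcast _ _ _ hleft
  have hmidC : ∀ p : ℕ, W p + W (p+2) = 2 * ((Real.cos θ : ℝ) : ℂ) * W (p+1) :=
    fun p => hcast _ _ _ (hmid p)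
  have hrightC : W (n-2) + W (n-1) = 2 * ((Real.cos θ : ℝ) : ℂ) * W (n-1) :=
    hcast _ _ _ hright
  -- the eigenvector
  set v : Fin n → ℂ := fun i => dsgn n (i : ℕ) * W (i : ℕ) with hv
  have hd0 : dsgn n 0 = 1 := by
    unfold dsgn; rw [if_pos (Or.inl rfl)]; norm_num
  have hd1 : dsgn n 1 = 1 := by
    unfold dsgn; rw [if_neg (by omega)]; norm_num
  have hdn2 : dsgn n (n-2) = dsgn n (n-1) := by
    unfold dsgn
    rw [if_neg (by omega), if_pos (Or.inr rfl), show n-2+1 = n-1 by omega]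
  -- the per-row eigen equation
  have hval : ∀ (t : ℕ) (h : t < n), ((⟨t, h⟩ : Fin n) : ℕ) = t := fun _ _ => rfl
  have key : ∀ j : Fin n, (∑ i : Fin n, matAdag n a b j i * v i) = lam * v j := by
    intro j
    obtain ⟨jv, hj⟩ := j
    have expand : ∀ i : Fin n, matAdag n a b ⟨jv, hj⟩ i * v i =
        (if (i:ℕ) = jv then (if jv = 0 ∨ jv = n - 1 then a + b else a) * v i else 0)
        + (if (i:ℕ) = jv + 1 then b * dsgn n jv * dsgn n (jv+1) * v i else 0)
        + (if (i:ℕ) + 1 = jv then b * dsgn n (i:ℕ) * dsgn n ((i:ℕ)+1) * v i else 0) := by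
      intro i
      rw [rowFormula n hn a b ⟨jv, hj⟩ i]
      simp only [hval]
      split_ifs <;> ring
    rw [Finset.sum_congr rfl (fun i _ => expand i), Finset.sum_add_distrib,
        Finset.sum_add_distrib]
    rcases Nat.lt_or_ge jv 1 with hc0 | hc1
    · -- first row
      obtain rfl : jv = 0 := by omega
      rw [sum_if (n := n) 0 (by omega), sum_if (n := n) 1 (by omega),
          Finset.sum_eq_zero (fun (i : Fin n) _ => if_neg (by omega)),
          if_pos (Or.inl rfl), hlam]
      simp only [hv, hval, hd0, hd1]
      linear_combination b * hleftC
    · rcases Nat.lt_or_ge jv (n-1) with hcm | hce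
      · -- middle rows
        obtain ⟨t, rfl⟩ : ∃ t, jv = t + 1 := ⟨jv - 1, by omega⟩
        rw [sum_if (n := n) (t+1) (by omega), sum_if (n := n) (t+2) (by omega),
            (Finset.sum_congr rfl (fun (i : Fin n) _ =>
              if_congr (by omega) rfl rfl) :
              (∑ i : Fin n, if (i:ℕ) + 1 = t + 1 then
                b * dsgn n (i:ℕ) * dsgn n ((i:ℕ)+1) * v i else 0) =
              ∑ i : Fin n, if (i:ℕ) = t then
                b * dsgn n (i:ℕ) * dsgn n ((i:ℕ)+1) * v i else 0),
            sum_if (n := n) t (by omega), if_neg (by omega), hlam]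
        simp only [hv, hval]
        linear_combination (b * dsgn n (t+1)) * hmidC t
          + (b * dsgn n (t+1) * W (t+2)) * dsgn_sq n (t+2)
          + (b * dsgn n (t+1) * W t) * dsgn_sq n t
      · -- last row
        obtain rfl : jv = n - 1 := by omega
        rw [sum_if (n := n) (n-1) (by omega),
            Finset.sum_eq_zero (fun (i : Fin n) _ =>
              if_neg (by have := i.isLt; omega)),
            (Finset.sum_congr rfl (fun (i : Fin n) _ =>
              if_congr (by omega) rfl rfl) :
              (∑ i : Fin n, if (i:ℕ) + 1 = n - 1 then
                b * dsgn n (i:ℕ) * dsgn n ((i:ℕ)+1) * v i else 0) =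
              ∑ i : Fin n, if (i:ℕ) = n - 2 then
                b * dsgn n (i:ℕ) * dsgn n ((i:ℕ)+1) * v i else 0),
            sum_if (n := n) (n-2) (by omega), if_pos (Or.inr rfl), hlam]
        simp only [hv, hval, show n - 2 + 1 = n - 1 from by omega, hdn2]
        linear_combination (b * dsgn n (n-1)) * hrightC
          + (b * dsgn n (n-1) * W (n-2)) * dsgn_sq n (n-1)
  -- nonvanishing of the eigenvector
  have hm_lt : m < n := by omega
  have hθlt : θ < Real.pi := by
    rw [hθ]
    rw [div_lt_iff₀ hn0]
    have : (m:ℝ) < n := by exact_mod_cast hm_lt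
    nlinarith
  have hθ0 : 0 ≤ θ := by rw [hθ]; positivity
  have hw0 : 0 < w 0 := by
    rw [hw]; simp only
    rw [show ((0:ℕ):ℝ) + 1/2 = 1/2 by norm_num]
    apply Real.cos_pos_of_mem_Ioo
    constructor <;> [nlinarith; nlinarith]
  have hvne : v ≠ 0 := by
    intro h
    have h0 : v ⟨0, by omega⟩ = 0 := congrFun h _
    rw [hv] at h0
    simp only [show ((⟨0, by omega⟩ : Fin n) : ℕ) = 0 from rfl, hd0, one_mul, hW] at h0
    rw [Complex.ofReal_eq_zero] at h0
    exact absurd h0 (ne_of_gt hw0)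
  -- conclude
  have hmv : (lam • (1 : Matrix (Fin n) (Fin n) ℂ) - matAdag n a b).mulVec v = 0 := by
    rw [Matrix.sub_mulVec, Matrix.smul_mulVec, Matrix.one_mulVec]
    funext j
    simp only [Pi.sub_apply, Pi.smul_apply, smul_eq_mul, Pi.zero_apply,
      Matrix.mulVec, dotProduct]
    rw [key j]; ring
  exact Matrix.exists_mulVec_eq_zero_iff.1 ⟨v, hvne, hmv⟩
end

section
/- Let n ≥ 5 be an integer and c ∈ ℂ, and let B be the n×n complex matrix (rows and columns indexed 1,…,n) with B_{j,j} = c for all j, B_{1,2} = 2, B_{2,1} = 1, B_{n−1,n} = 1, B_{n,n−1} = 2, B_{j,j+1} = B_{j+1,j} = −1 for 2 ≤ j ≤ n−2, and all other entries 0. Then for every λ ∈ ℂ, the characteristic polynomial of B satisfies det(λ·I_n − B) = ((λ−c)² − 4)·U_{n−2}((λ−c)/2), where U_m denotes the m-th Chebyshev polynomial of the second kind. -/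
/-- Chebyshev polynomials of the second kind:
`U 0 x = 1`, `U 1 x = 2x`, `U (m+2) x = 2x * U (m+1) x - U m x`. -/
def chebU (x : ℂ) : ℕ → ℂ
  | 0 => 1
  | 1 => 2 * x
  | (m + 2) => 2 * x * chebU x (m + 1) - chebU x m

def triMat (F : ℕ → ℕ → ℂ) (k off : ℕ) : Matrix (Fin k) (Fin k) ℂ :=
  Matrix.of fun i j => F (off + i) (off + j)

lemma det_triMat_step (F : ℕ → ℕ → ℂ)
    (htri : ∀ i j : ℕ, i + 2 ≤ j ∨ j + 2 ≤ i → F i j = 0) (k off : ℕ) :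
    (triMat F (k + 2) off).det =
      F off off * (triMat F (k + 1) (off + 1)).det -
        F off (off + 1) * (F (off + 1) off * (triMat F k (off + 2)).det) := by
  have e1 : (triMat F (k + 2) off).submatrix Fin.succ ((0 : Fin (k+2)).succAbove) =
      triMat F (k + 1) (off + 1) := by
    ext i j
    simp only [Matrix.submatrix_apply, triMat, Matrix.of_apply, Fin.succAbove_zero,
      Fin.val_succ]
    congr 1 <;> omega
  rw [Matrix.det_succ_row_zero, Fin.sum_univ_succ, Fin.sum_univ_succ]
  have hz : ∀ j : Fin k, ((-1 : ℂ) ^ ((j.succ.succ : Fin (k+2)) : ℕ) *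
      triMat F (k+2) off 0 j.succ.succ *
      ((triMat F (k+2) off).submatrix Fin.succ (j.succ.succ).succAbove).det) = 0 := by
    intro j
    have h0 : triMat F (k + 2) off 0 j.succ.succ = 0 := by
      apply htri
      left
      simp only [Fin.val_succ, Fin.val_zero]
      omega
    rw [h0]; ring
  rw [Finset.sum_eq_zero (fun j _ => hz j), add_zero]
  rw [e1]
  -- second term
  have hN : ((triMat F (k+2) off).submatrix Fin.succ ((Fin.succ 0 : Fin (k+2)).succAbove)).det
      = F (off + 1) off * (triMat F k (off + 2)).det := by
    rw [Matrix.det_succ_column_zero, Fin.sum_univ_succ]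
    have hz2 : ∀ i : Fin k, ((-1 : ℂ) ^ ((i.succ : Fin (k+1)) : ℕ) *
        ((triMat F (k+2) off).submatrix Fin.succ ((Fin.succ 0 : Fin (k+2)).succAbove)) i.succ 0 *
        ((((triMat F (k+2) off).submatrix Fin.succ ((Fin.succ 0 : Fin (k+2)).succAbove)).submatrix i.succ.succAbove Fin.succ)).det) = 0 := by
      intro i
      have h0 : ((triMat F (k+2) off).submatrix Fin.succ ((Fin.succ 0 : Fin (k+2)).succAbove)) i.succ 0 = 0 := by
        simp only [Matrix.submatrix_apply, Fin.succ_succAbove_zero, triMat, Matrix.of_apply]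
        apply htri
        right
        simp only [Fin.val_succ, Fin.val_zero]
        omega
      rw [h0]; ring
    rw [Finset.sum_eq_zero (fun i _ => hz2 i), add_zero]
    have e2 : (((triMat F (k+2) off).submatrix Fin.succ ((Fin.succ 0 : Fin (k+2)).succAbove)).submatrix (0 : Fin (k+1)).succAbove Fin.succ) = triMat F k (off + 2) := by
      ext i j
      simp only [Matrix.submatrix_apply, Fin.succAbove_zero, Fin.succ_succAbove_succ,
        triMat, Matrix.of_apply, Fin.val_succ]
      congr 1 <;> omega
    rw [e2]
    simp only [Matrix.submatrix_apply, Fin.succ_succAbove_zero, Fin.val_zero, pow_zero,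
      one_mul, triMat, Matrix.of_apply, Fin.val_succ, Fin.val_zero, add_zero]

  rw [Fin.succ_zero_eq_one] at hN ⊢
  rw [hN]
  simp only [triMat, Matrix.of_apply, Fin.val_zero, Fin.val_one, add_zero, pow_zero, pow_one]
  ring

def entryF (n : ℕ) (t : ℂ) (i j : ℕ) : ℂ :=
  if i = j then t
  else if i = 0 ∧ j = 1 then -2
  else if i = 1 ∧ j = 0 then -1
  else if i = n - 2 ∧ j = n - 1 then -1
  else if i = n - 1 ∧ j = n - 2 then -2
  else if (i + 1 = j ∨ j + 1 = i) ∧ 1 ≤ min i j ∧ min i j ≤ n - 3 then 1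
  else 0

lemma entryF_far (n : ℕ) (t : ℂ) {i j : ℕ} (h : i + 2 ≤ j ∨ j + 2 ≤ i) :
    entryF n t i j = 0 := by
  unfold entryF; split_ifs <;> first | rfl | (exfalso; omega) | (exfalso; tauto)

lemma entryF_diag (n : ℕ) (t : ℂ) (i : ℕ) : entryF n t i i = t := by
  simp [entryF]

lemma entryF_mid (n : ℕ) (t : ℂ) {i : ℕ} (h1 : 1 ≤ i) (h2 : i ≤ n - 3) :
    entryF n t i (i + 1) = 1 := by
  unfold entryF; split_ifs <;> first | rfl | (exfalso; omega) | (exfalso; tauto)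

lemma entryF_mid' (n : ℕ) (t : ℂ) {i : ℕ} (h1 : 1 ≤ i) (h2 : i ≤ n - 3) :
    entryF n t (i + 1) i = 1 := by
  unfold entryF; split_ifs <;> first | rfl | (exfalso; omega) | (exfalso; tauto)

lemma entryF_bot1 (n : ℕ) (t : ℂ) (hn : 5 ≤ n) : entryF n t (n - 2) (n - 1) = -1 := by
  unfold entryF; split_ifs <;> first | rfl | (exfalso; omega) | (exfalso; tauto)

lemma entryF_bot2 (n : ℕ) (t : ℂ) (hn : 5 ≤ n) : entryF n t (n - 1) (n - 2) = -2 := by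
  unfold entryF; split_ifs <;> first | rfl | (exfalso; omega) | (exfalso; tauto)

lemma entryF_01 (n : ℕ) (t : ℂ) (hn : 5 ≤ n) : entryF n t 0 1 = -2 := by
  unfold entryF; split_ifs <;> first | rfl | (exfalso; omega) | (exfalso; tauto)

lemma entryF_10 (n : ℕ) (t : ℂ) (hn : 5 ≤ n) : entryF n t 1 0 = -1 := by
  unfold entryF; split_ifs <;> first | rfl | (exfalso; omega) | (exfalso; tauto)

lemma chebU_two_step (x : ℂ) (m : ℕ) :
    chebU x (m + 2) = 2 * x * chebU x (m + 1) - chebU x m := by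
  rw [chebU]

lemma Pf (n : ℕ) (hn : 5 ≤ n) (t : ℂ) :
    ∀ k, 2 ≤ k → k ≤ n - 1 →
      (triMat (entryF n t) k (n - k)).det =
        t * chebU (t / 2) (k - 1) - 2 * chebU (t / 2) (k - 2) := by
  intro k
  induction k using Nat.strong_induction_on with
  | _ k ih =>
    match k with
    | 0 => intro h _; omega
    | 1 => intro h _; omega
    | 2 =>
      intro _ _
      rw [Matrix.det_fin_two]
      simp only [triMat, Matrix.of_apply, Fin.val_zero, Fin.val_one, add_zero]
      rw [show n - 2 + 1 = n - 1 from by omega]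
      rw [entryF_diag, entryF_diag, entryF_bot1 n t hn, entryF_bot2 n t hn]
      show _ = t * chebU (t/2) 1 - 2 * chebU (t/2) 0
      simp only [chebU]; ring
    | 3 =>
      intro _ _
      rw [Matrix.det_fin_three]
      simp only [triMat, Matrix.of_apply, Fin.val_zero, Fin.val_one, Fin.val_two, add_zero]
      rw [entryF_diag, entryF_diag, entryF_diag,
        entryF_mid n t (by omega) (by omega) (i := n - 3),
        entryF_mid' n t (by omega) (by omega) (i := n - 3),
        entryF_far n t (i := n - 3) (j := n - 3 + 2) (Or.inl (by omega)),
        entryF_far n t (i := n - 3 + 2) (j := n - 3) (Or.inr (by omega)),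
        show n - 3 + 1 = n - 2 from by omega, show n - 3 + 2 = n - 1 from by omega,
        entryF_bot1 n t hn, entryF_bot2 n t hn]
      show _ = t * chebU (t/2) 2 - 2 * chebU (t/2) 1
      rw [show (2:ℕ) = 0 + 2 from rfl, chebU_two_step]
      simp only [chebU]; ring
    | (k + 4) =>
      intro _ hk
      have hrec : (triMat (entryF n t) (k + 4) (n - (k + 4))).det =
          entryF n t (n - (k + 4)) (n - (k + 4)) *
            (triMat (entryF n t) (k + 3) (n - (k + 4) + 1)).det -
          entryF n t (n - (k + 4)) (n - (k + 4) + 1) *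
            (entryF n t (n - (k + 4) + 1) (n - (k + 4)) *
              (triMat (entryF n t) (k + 2) (n - (k + 4) + 2)).det) :=
        det_triMat_step (entryF n t) (fun i j h => entryF_far n t h) (k + 2) (n - (k + 4))
      rw [entryF_diag,
        entryF_mid n t (i := n - (k + 4)) (by omega) (by omega),
        entryF_mid' n t (i := n - (k + 4)) (by omega) (by omega)] at hrec
      rw [show n - (k + 4) + 1 = n - (k + 3) from by omega,
          show n - (k + 4) + 2 = n - (k + 2) from by omega] at hrec
      have ih1 : (triMat (entryF n t) (k + 3) (n - (k + 3))).det =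
          t * chebU (t / 2) (k + 2) - 2 * chebU (t / 2) (k + 1) :=
        ih (k + 3) (by omega) (by omega) (by omega)
      have ih2 : (triMat (entryF n t) (k + 2) (n - (k + 2))).det =
          t * chebU (t / 2) (k + 1) - 2 * chebU (t / 2) k :=
        ih (k + 2) (by omega) (by omega) (by omega)
      rw [ih1, ih2] at hrec
      refine hrec.trans ?_
      show _ = t * chebU (t / 2) (k + 3) - 2 * chebU (t / 2) (k + 2)
      rw [show k + 3 = (k + 1) + 2 from rfl, chebU_two_step (t/2) (k+1),
        show (k + 1) + 1 = k + 2 from rfl, chebU_two_step (t/2) k]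
      ring


set_option maxHeartbeats 1600000 in
/-- For `n ≥ 5` and `c λ : ℂ`, the matrix `B` (which is `A` with `a = c`, `b = 1`)
satisfies `det(λ·I - B) = ((λ-c)² - 4)·U_{n-2}((λ-c)/2)`. -/
theorem charpoly_matB (n : ℕ) (hn : 5 ≤ n) (c : ℂ) (lam : ℂ) :
    Matrix.det (lam • (1 : Matrix (Fin n) (Fin n) ℂ) - matA n c 1) =
      ((lam - c) ^ 2 - 4) * chebU ((lam - c) / 2) (n - 2) := by
  have hM : lam • (1 : Matrix (Fin n) (Fin n) ℂ) - matA n c 1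
      = triMat (entryF n (lam - c)) n 0 := by
    ext i j
    have hi := i.isLt
    have hj := j.isLt
    simp only [Matrix.sub_apply, Matrix.smul_apply, Matrix.one_apply, smul_eq_mul,
      matA, Matrix.of_apply, triMat, entryF, zero_add, Fin.ext_iff]
    split_ifs <;> first | (exfalso; omega) | ring | (exfalso; tauto)
  obtain ⟨p, rfl⟩ : ∃ p, n = p + 5 := ⟨n - 5, by omega⟩
  rw [hM]
  have hrec : (triMat (entryF (p+5) (lam-c)) (p+5) 0).det =
      entryF (p+5) (lam-c) 0 0 * (triMat (entryF (p+5) (lam-c)) (p+4) 1).det -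
      entryF (p+5) (lam-c) 0 1 *
        (entryF (p+5) (lam-c) 1 0 * (triMat (entryF (p+5) (lam-c)) (p+3) 2).det) :=
    det_triMat_step _ (fun i j h => entryF_far (p+5) (lam-c) h) (p+3) 0
  have h1 := Pf (p+5) (by omega) (lam-c) (p+4) (by omega) (by omega)
  rw [show p+5-(p+4) = 1 from by omega, show p+4-1 = p+3 from by omega,
    show p+4-2 = p+2 from by omega] at h1
  have h2 := Pf (p+5) (by omega) (lam-c) (p+3) (by omega) (by omega)
  rw [show p+5-(p+3) = 2 from by omega, show p+3-1 = p+2 from by omega,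
    show p+3-2 = p+1 from by omega] at h2
  rw [hrec, h1, h2, entryF_diag, entryF_01 _ _ (by omega), entryF_10 _ _ (by omega),
    show p+5-2 = p+3 from by omega,
    show p+3 = (p+1)+2 from rfl, chebU_two_step ((lam-c)/2) (p+1),
    show (p+1)+1 = p+2 from rfl]
  ring
end

section
/- Let n ≥ 5 be an integer, a ∈ ℂ, and b ∈ ℂ with b ≠ 0, and let A† be the associated n×n tridiagonal matrix. Then det(A†) = ∏_{k=1}^{n} (a − 2b·cos(kπ/n)). -/
open Polynomial

/-! ### Chebyshev-like polynomials -/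

noncomputable def Tpoly (b : ℂ) : ℕ → ℂ[X]
  | 0 => 1
  | 1 => X
  | (m+2) => X * Tpoly b (m+1) - C (b^2) * Tpoly b m

lemma Tpoly_monic (b : ℂ) : ∀ m, (Tpoly b m).Monic ∧ (Tpoly b m).natDegree = m
  | 0 => ⟨monic_one, natDegree_one⟩
  | 1 => ⟨monic_X, natDegree_X⟩
  | (m+2) => by
    obtain ⟨h1, h1d⟩ := Tpoly_monic b (m+1)
    obtain ⟨h0, h0d⟩ := Tpoly_monic b m
    have hXm : (X * Tpoly b (m+1)).Monic := monic_X.mul h1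
    have hXd : (X * Tpoly b (m+1)).natDegree = m + 2 := by
      rw [natDegree_X_mul h1.ne_zero, h1d]
    have hnd : (C (b^2) * Tpoly b m).natDegree < (X * Tpoly b (m+1)).natDegree := by
      have := natDegree_C_mul_le (b^2) (Tpoly b m)
      omega
    have hdeg : (C (b^2) * Tpoly b m).degree < (X * Tpoly b (m+1)).degree :=
      degree_lt_degree hnd
    refine ⟨?_, ?_⟩
    · show (X * Tpoly b (m+1) - C (b^2) * Tpoly b m).Monic
      have := hXm.add_of_left (q := -(C (b^2) * Tpoly b m)) (by simpa using hdeg)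
      simpa [sub_eq_add_neg] using this
    · show (X * Tpoly b (m+1) - C (b^2) * Tpoly b m).natDegree = m + 2
      rw [natDegree_sub_eq_left_of_natDegree_lt hnd, hXd]

lemma Tpoly_eval_cos (b : ℂ) (θ : ℝ) : ∀ m,
    (Tpoly b m).eval (2 * b * Real.cos θ) * Complex.sin θ
      = b ^ m * Complex.sin ((m + 1 : ℕ) * θ)
  | 0 => by simp [Tpoly]
  | 1 => by
    simp only [Tpoly, eval_X, pow_one, Nat.cast_one]
    rw [show ((1 + 1 : ℕ) : ℂ) * θ = θ + θ by push_cast; ring, Complex.sin_add,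
      Complex.ofReal_cos]
    ring
  | (m+2) => by
    have h1 := Tpoly_eval_cos b θ (m+1)
    have h0 := Tpoly_eval_cos b θ m
    simp only [Tpoly, eval_sub, eval_mul, eval_X, eval_C]
    have key : Complex.sin ((m + 2 + 1 : ℕ) * θ)
        = 2 * Complex.cos θ * Complex.sin ((m + 1 + 1 : ℕ) * θ) - Complex.sin ((m + 1 : ℕ) * θ) := by
      have e1 : ((m + 2 + 1 : ℕ) : ℂ) * θ = ((m + 1 + 1 : ℕ) : ℂ) * θ + θ := by push_cast; ring
      have e2 : ((m + 1 : ℕ) : ℂ) * θ = ((m + 1 + 1 : ℕ) : ℂ) * θ - θ := by push_cast; ring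
      rw [e1, e2, Complex.sin_add, Complex.sin_sub]
      ring
    rw [key, Complex.ofReal_cos] at *
    linear_combination (2 * b * Complex.cos θ) * h1 - b^2 * h0

/-- `Tpoly b (n-1)` factors over the values `2 b cos(kπ/n)`, `k = 1, …, n-1`. -/
lemma Tpoly_eq_prod (n : ℕ) (hn : 2 ≤ n) (b : ℂ) (hb : b ≠ 0) :
    Tpoly b (n-1) = ∏ k ∈ Finset.Icc 1 (n-1),
      (X - C (2 * b * ((Real.cos ((k : ℝ) * Real.pi / (n : ℝ))) : ℂ))) := by
  set c : ℕ → ℂ := fun k => 2 * b * ((Real.cos ((k : ℝ) * Real.pi / (n : ℝ))) : ℂ) with hc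
  have hnR : (0 : ℝ) < n := by positivity
  have hroot : ∀ k ∈ Finset.Icc 1 (n-1), (Tpoly b (n-1)).eval (c k) = 0 := by
    intro k hk
    simp only [Finset.mem_Icc] at hk
    set θ : ℝ := (k : ℝ) * Real.pi / n with hθ
    have hθpos : 0 < θ := by
      apply div_pos (mul_pos _ Real.pi_pos) hnR
      exact_mod_cast hk.1
    have hθlt : θ < Real.pi := by
      rw [hθ, div_lt_iff₀ hnR]
      have : (k : ℝ) < n := by exact_mod_cast (by omega : k < n)
      nlinarith [Real.pi_pos]
    have hsin : Complex.sin θ ≠ 0 := by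
      rw [← Complex.ofReal_sin]
      exact_mod_cast (Real.sin_pos_of_pos_of_lt_pi hθpos hθlt).ne'
    have h := Tpoly_eval_cos b θ (n-1)
    have harg : ((n - 1 + 1 : ℕ) : ℂ) * (θ : ℂ) = (((k : ℝ) * Real.pi : ℝ) : ℂ) := by
      have hn1 : (n - 1 + 1 : ℕ) = n := by omega
      have hre : (n : ℝ) * θ = (k : ℝ) * Real.pi := by
        rw [hθ]; field_simp
      rw [hn1, ← hre]
      push_cast
      ring
    rw [harg] at h
    have hzero : Complex.sin (((k : ℝ) * Real.pi : ℝ) : ℂ) = 0 := by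
      rw [← Complex.ofReal_sin]
      exact_mod_cast Real.sin_nat_mul_pi k
    rw [hzero, mul_zero] at h
    exact (mul_eq_zero.1 h).resolve_right hsin
  have hinj : Set.InjOn c (Finset.Icc 1 (n-1)) := by
    intro k hk l hl hkl
    simp only [Finset.coe_Icc, Set.mem_Icc] at hk hl
    have h2b : (2 : ℂ) * b ≠ 0 := by simp [hb]
    have hcos : ((Real.cos ((k : ℝ) * Real.pi / n)) : ℂ)
        = ((Real.cos ((l : ℝ) * Real.pi / n)) : ℂ) := mul_left_cancel₀ h2b hkl
    have hcosR : Real.cos ((k : ℝ) * Real.pi / n) = Real.cos ((l : ℝ) * Real.pi / n) := by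
      exact_mod_cast hcos
    have hmem : ∀ j : ℕ, 1 ≤ j → j ≤ n - 1 → (j : ℝ) * Real.pi / n ∈ Set.Icc 0 Real.pi := by
      intro j h1 h2
      constructor
      · positivity
      · rw [div_le_iff₀ hnR]
        have : (j : ℝ) ≤ n := by exact_mod_cast (by omega : j ≤ n)
        nlinarith [Real.pi_pos]
    have := Real.injOn_cos (hmem k hk.1 hk.2) (hmem l hl.1 hl.2) hcosR
    have hne : Real.pi / n ≠ 0 := by positivity
    have hkR : (k : ℝ) = l := by
      rw [div_left_inj' hnR.ne', mul_left_inj' Real.pi_ne_zero] at this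
      exact this
    exact_mod_cast hkR
  set p : ℂ[X] := Tpoly b (n-1) with hp
  set q : ℂ[X] := ∏ k ∈ Finset.Icc 1 (n-1), (X - C (c k)) with hq
  obtain ⟨hpm, hpd⟩ := Tpoly_monic b (n-1)
  have hqm : q.Monic := monic_prod_of_monic _ _ (fun k _ => monic_X_sub_C _)
  have hqd : q.natDegree = n - 1 := by
    rw [hq, natDegree_prod _ _ (fun k _ => X_sub_C_ne_zero _)]
    simp [Nat.card_Icc]
  have hdeg : p.degree = q.degree := by
    rw [degree_eq_natDegree hpm.ne_zero, degree_eq_natDegree hqm.ne_zero, hpd, hqd]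
  have hsub : p - q = 0 := by
    by_cases h0 : p - q = 0
    · exact h0
    set s : Finset ℂ := (Finset.Icc 1 (n-1)).image c with hs
    apply Polynomial.eq_zero_of_natDegree_lt_card_of_eval_eq_zero' _ s
    · intro i hi
      rw [hs, Finset.mem_image] at hi
      obtain ⟨k, hk, rfl⟩ := hi
      rw [eval_sub, hroot k hk, hq, eval_prod]
      rw [Finset.prod_eq_zero hk (by simp)]
      ring
    · have hcard : s.card = n - 1 := by
        rw [hs, Finset.card_image_of_injOn hinj, Nat.card_Icc]
        omega
      rw [hcard]
      have hlt : (p - q).degree < p.degree :=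
        degree_sub_lt hdeg hpm.ne_zero (by rw [hpm.leadingCoeff, hqm.leadingCoeff])
      rw [degree_eq_natDegree hpm.ne_zero, hpd] at hlt
      exact (natDegree_lt_iff_degree_lt h0).2 hlt
  have := sub_eq_zero.1 hsub
  simpa [hq] using this

/-! ### The tridiagonal determinant recurrence -/

def Ment (n : ℕ) (a b : ℂ) (p q : ℕ) : ℂ :=
  if p = q then (if p = 0 ∨ p = n - 1 then a + b else a)
  else if p + 1 = q then (if p = 0 ∨ p = n - 2 then b else -b)
  else if q + 1 = p then (if q = 0 ∨ q = n - 2 then b else -b)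
  else 0

def MoM (n : ℕ) (a b : ℂ) (o m : ℕ) : Matrix (Fin m) (Fin m) ℂ :=
  Matrix.of fun i j => Ment n a b (o + i) (o + j)

lemma Ment_zero_of_lt {n : ℕ} {a b : ℂ} {p q : ℕ} (h : p + 2 ≤ q ∨ q + 2 ≤ p) :
    Ment n a b p q = 0 := by
  unfold Ment
  split_ifs <;> first | rfl | omega

lemma MoM_det_one (n : ℕ) (a b : ℂ) (o : ℕ) :
    (MoM n a b o 1).det = Ment n a b o o := by
  rw [Matrix.det_fin_one]
  simp [MoM]

lemma MoM_det_rec (n : ℕ) (a b : ℂ) (o m : ℕ) :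
    (MoM n a b o (m+2)).det
      = Ment n a b o o * (MoM n a b (o+1) (m+1)).det
        - Ment n a b (o+1) o * Ment n a b o (o+1) * (MoM n a b (o+2) m).det := by
  have hsub0 : (MoM n a b o (m+2)).submatrix ((0 : Fin (m+2)).succAbove) Fin.succ
      = MoM n a b (o+1) (m+1) := by
    ext i j
    simp only [MoM, Matrix.submatrix_apply, Matrix.of_apply, Fin.succAbove_zero, Fin.val_succ]
    rw [show o + (↑i + 1) = o + 1 + ↑i by omega, show o + (↑j + 1) = o + 1 + ↑j by omega]
  have hsub1 : ((MoM n a b o (m+2)).submatrix (((0 : Fin (m+1)).succ).succAbove) Fin.succ).submatrix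
      Fin.succ ((0 : Fin (m+1)).succAbove) = MoM n a b (o+2) m := by
    ext i j
    simp only [MoM, Matrix.submatrix_apply, Matrix.of_apply, Fin.succAbove_zero]
    rw [Fin.succ_succAbove_succ, Fin.succAbove_zero]
    simp only [Fin.val_succ]
    rw [show o + (↑i + 1 + 1) = o + 2 + ↑i by omega, show o + (↑j + 1 + 1) = o + 2 + ↑j by omega]
  rw [Matrix.det_succ_column_zero, Fin.sum_univ_succ, Fin.sum_univ_succ]
  have hrest : ∀ i : Fin m,
      ((-1 : ℂ) ^ (((i.succ.succ : Fin (m+2)) : ℕ)) * (MoM n a b o (m+2)) i.succ.succ 0 *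
        ((MoM n a b o (m+2)).submatrix (Fin.succAbove i.succ.succ) Fin.succ).det) = 0 := by
    intro i
    have : (MoM n a b o (m+2)) i.succ.succ 0 = 0 := by
      show Ment n a b (o + (↑i + 1 + 1)) (o + 0) = 0
      exact Ment_zero_of_lt (by omega)
    rw [this]; ring
  rw [Finset.sum_congr rfl (fun i _ => hrest i), Finset.sum_const_zero, add_zero]
  have hminor : ((MoM n a b o (m+2)).submatrix (((0 : Fin (m+1)).succ).succAbove) Fin.succ).det
      = Ment n a b o (o+1) * (MoM n a b (o+2) m).det := by
    rw [Matrix.det_succ_row_zero, Fin.sum_univ_succ]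
    have hrow : ∀ j : Fin m,
        ((-1 : ℂ) ^ ((j.succ : Fin (m+1)) : ℕ) *
          ((MoM n a b o (m+2)).submatrix (((0 : Fin (m+1)).succ).succAbove) Fin.succ) 0 j.succ *
          (((MoM n a b o (m+2)).submatrix (((0 : Fin (m+1)).succ).succAbove) Fin.succ).submatrix
            Fin.succ (Fin.succAbove j.succ)).det) = 0 := by
      intro j
      have : ((MoM n a b o (m+2)).submatrix (((0 : Fin (m+1)).succ).succAbove) Fin.succ) 0 j.succ
          = 0 := by
        show Ment n a b (o + ((((0 : Fin (m+1)).succ).succAbove 0 : Fin (m+2)) : ℕ))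
          (o + (↑j + 1 + 1)) = 0
        rw [Fin.succ_succAbove_zero]
        exact Ment_zero_of_lt (by simp only [Fin.val_zero]; omega)
      rw [this]; ring
    rw [Finset.sum_congr rfl (fun j _ => hrow j), Finset.sum_const_zero, add_zero, hsub1]
    have h00 : ((MoM n a b o (m+2)).submatrix (((0 : Fin (m+1)).succ).succAbove) Fin.succ) 0 0
        = Ment n a b o (o+1) := by
      show Ment n a b (o + ((((0 : Fin (m+1)).succ).succAbove 0 : Fin (m+2)) : ℕ))
        (o + ((0 : Fin (m+1)).succ : ℕ)) = _
      rw [Fin.succ_succAbove_zero]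
      norm_num
    rw [h00]
    simp
  have h10 : (MoM n a b o (m+2)) (Fin.succ 0) 0 = Ment n a b (o+1) o := by
    show Ment n a b (o + ((0 : Fin (m+1)).succ : ℕ)) (o + 0) = _
    norm_num
  have h00 : (MoM n a b o (m+2)) 0 0 = Ment n a b o o := by
    show Ment n a b (o + ((0 : Fin (m+2)) : ℕ)) (o + ((0 : Fin (m+2)) : ℕ)) = _
    norm_num
  rw [hsub0, hminor, h10, h00]
  simp only [Fin.val_zero, pow_zero, Fin.val_succ, pow_succ, pow_zero]
  ring

lemma matAdag_eq_MoM (n : ℕ) (hn : 5 ≤ n) (a b : ℂ) :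
    matAdag n a b = MoM n a b 0 n := by
  ext i j
  have hi := i.isLt
  have hj := j.isLt
  simp only [matAdag, MoM, Ment, Matrix.of_apply, Nat.zero_add, zero_add]
  split_ifs <;> first | rfl | omega

/-! ### The scalar sequence -/

noncomputable def Sv (a b : ℂ) : ℕ → ℂ
  | 0 => 1
  | 1 => a + b
  | (m+2) => a * Sv a b (m+1) - b^2 * Sv a b m

lemma det_MoM_eq_Sv (n : ℕ) (hn : 5 ≤ n) (a b : ℂ) :
    ∀ m o, 1 ≤ o → o + m = n → (MoM n a b o m).det = Sv a b m
  | 0, o, _, _ => Matrix.det_fin_zero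
  | 1, o, ho, hom => by
    rw [MoM_det_one, Sv]
    unfold Ment
    rw [if_pos rfl, if_pos (by omega)]
  | (m+2), o, ho, hom => by
    rw [MoM_det_rec, det_MoM_eq_Sv n hn a b (m+1) (o+1) (by omega) (by omega),
      det_MoM_eq_Sv n hn a b m (o+2) (by omega) (by omega)]
    have hdiag : Ment n a b o o = a := by
      unfold Ment
      rw [if_pos rfl, if_neg (by omega)]
    have hoff : Ment n a b (o+1) o * Ment n a b o (o+1) = b^2 := by
      have h1 : Ment n a b (o+1) o = (if o = 0 ∨ o = n - 2 then b else -b) := by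
        unfold Ment
        rw [if_neg (by omega : ¬(o + 1 = o)), if_neg (by omega : ¬(o + 1 + 1 = o)),
          if_pos (rfl : o + 1 = o + 1)]
      have h2 : Ment n a b o (o+1) = (if o = 0 ∨ o = n - 2 then b else -b) := by
        unfold Ment
        rw [if_neg (by omega : ¬(o = o + 1)), if_pos (rfl : o + 1 = o + 1)]
      rw [h1, h2]
      by_cases h : o = 0 ∨ o = n - 2
      · rw [if_pos h]; ring
      · rw [if_neg h]; ring
    rw [hdiag, hoff, Sv]

lemma Sv_eq (a b : ℂ) : ∀ m, Sv a b (m+1)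
    = (Tpoly b (m+1)).eval a + b * (Tpoly b m).eval a
  | 0 => by simp [Sv, Tpoly]
  | 1 => by
    show Sv a b 2 = _
    rw [show (2 : ℕ) = 0 + 2 from rfl, Sv]
    simp [Sv, Tpoly]
    ring
  | (m+2) => by
    have h1 := Sv_eq a b (m+1)
    have h0 := Sv_eq a b m
    have e4 : (Tpoly b (m+1+1)).eval a
        = a * (Tpoly b (m+1)).eval a - b^2 * (Tpoly b m).eval a := by
      rw [show m+1+1 = m+2 from rfl]
      simp [Tpoly]
    have e3 : (Tpoly b (m+1+2)).eval a
        = a * (Tpoly b (m+1+1)).eval a - b^2 * (Tpoly b (m+1)).eval a := by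
      simp [Tpoly]
    show Sv a b (m+1+2) = (Tpoly b (m+1+2)).eval a + b * (Tpoly b (m+1+1)).eval a
    rw [Sv]
    linear_combination a * h1 - b^2 * h0 - e3 - b * e4

lemma det_matAdag_eq (n : ℕ) (hn : 5 ≤ n) (a b : ℂ) :
    (matAdag n a b).det = (a + 2*b) * (Tpoly b (n-1)).eval a := by
  obtain ⟨k, rfl⟩ : ∃ k, n = (k + 3) + 2 := ⟨n - 5, by omega⟩
  rw [matAdag_eq_MoM _ hn, MoM_det_rec,
    det_MoM_eq_Sv _ hn a b (k+3+1) (0+1) (by omega) (by omega),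
    det_MoM_eq_Sv _ hn a b (k+3) (0+2) (by omega) (by omega)]
  have hd : Ment (k+3+2) a b 0 0 = a + b := by
    unfold Ment
    rw [if_pos rfl, if_pos (Or.inl rfl)]
  have ho1 : Ment (k+3+2) a b (0+1) 0 = b := by
    unfold Ment
    rw [if_neg (by omega), if_neg (by omega), if_pos rfl, if_pos (Or.inl rfl)]
  have ho2 : Ment (k+3+2) a b 0 (0+1) = b := by
    unfold Ment
    rw [if_neg (by omega), if_pos rfl, if_pos (Or.inl rfl)]
  rw [hd, ho1, ho2]
  have e1 := Sv_eq a b (k+3)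
  have e2 := Sv_eq a b (k+2)
  rw [show k+2+1 = k+3 from rfl] at e2
  have e3 : (Tpoly b (k+3+1)).eval a
      = a * (Tpoly b (k+3)).eval a - b^2 * (Tpoly b (k+2)).eval a := by
    rw [show k+3+1 = k+2+2 from rfl]
    simp [Tpoly]
  rw [show k+3+2-1 = k+3+1 from rfl]
  linear_combination (a+b) * e1 - b^2 * e2 - b * e3

/-- For `n ≥ 5`, `a b : ℂ` with `b ≠ 0`,
`det A† = ∏_{k=1}^{n} (a - 2b·cos(kπ/n))`. -/
theorem det_matAdag_prod (n : ℕ) (hn : 5 ≤ n) (a b : ℂ) (hb : b ≠ 0) :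
    Matrix.det (matAdag n a b) =
      ∏ k ∈ Finset.Icc 1 n,
        (a - 2 * b * (Real.cos ((k : ℝ) * Real.pi / (n : ℝ)) : ℂ)) := by
  obtain ⟨m, rfl⟩ : ∃ m, n = m + 1 := ⟨n - 1, by omega⟩
  rw [Finset.prod_Icc_succ_top (by omega : 1 ≤ m + 1), det_matAdag_eq _ hn,
    show (m + 1) - 1 = m from rfl]
  have hT := Tpoly_eq_prod (m+1) (by omega) b hb
  rw [show (m + 1) - 1 = m from rfl] at hT
  rw [hT, Polynomial.eval_prod]
  simp only [eval_sub, eval_X, eval_C]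
  have hlast : Real.cos (((m + 1 : ℕ) : ℝ) * Real.pi / ((m + 1 : ℕ) : ℝ)) = -1 := by
    rw [mul_comm, mul_div_assoc, div_self (by positivity : ((m+1:ℕ):ℝ) ≠ 0),
      mul_one, Real.cos_pi]
  rw [hlast]
  push_cast
  ring
end

section
/- Let n ≥ 5 be an integer and let A† be the n×n tridiagonal matrix associated with a := 1 and b := i (where i = √−1). Then det(A†) = (1 + 2i)·F_n, where F_n is the n-th Fibonacci number. -/
open Matrix Complex

def tri (d u l : ℕ → ℂ) (n : ℕ) : Matrix (Fin n) (Fin n) ℂ :=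
  Matrix.of fun i j =>
    if (i : ℕ) = j then d i
    else if (i : ℕ) + 1 = j then u i
    else if (j : ℕ) + 1 = i then l j
    else 0

lemma tri_apply (d u l : ℕ → ℂ) (n : ℕ) (i j : Fin n) :
    tri d u l n i j =
      if (i : ℕ) = j then d i
      else if (i : ℕ) + 1 = j then u i
      else if (j : ℕ) + 1 = i then l j
      else 0 := rfl

lemma tri_sub1 (d u l : ℕ → ℂ) (n : ℕ) :
    (tri d u l (n + 1)).submatrix Fin.succ Fin.succ =
      tri (fun k => d (k + 1)) (fun k => u (k + 1)) (fun k => l (k + 1)) n := by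
  ext i j
  simp only [Matrix.submatrix_apply, tri_apply, Fin.val_succ]
  split_ifs <;> first | rfl | omega

lemma tri_sub2 (d u l : ℕ → ℂ) (n : ℕ) :
    (tri d u l (n + 2)).submatrix (fun i : Fin n => i.succ.succ) (fun j : Fin n => j.succ.succ) =
      tri (fun k => d (k + 2)) (fun k => u (k + 2)) (fun k => l (k + 2)) n := by
  ext i j
  simp only [Matrix.submatrix_apply, tri_apply, Fin.val_succ]
  split_ifs <;> first | rfl | omega

lemma det_tri_rec (d u l : ℕ → ℂ) (n : ℕ) :
    (tri d u l (n + 2)).det =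
      d 0 * (tri (fun k => d (k + 1)) (fun k => u (k + 1)) (fun k => l (k + 1)) (n + 1)).det
      - u 0 * l 0 *
        (tri (fun k => d (k + 2)) (fun k => u (k + 2)) (fun k => l (k + 2)) n).det := by
  rw [Matrix.det_succ_row_zero, Fin.sum_univ_succ, Fin.sum_univ_succ]
  have hz : ∑ j : Fin n, (-1 : ℂ) ^ ((j.succ.succ : Fin (n+2)) : ℕ) *
      tri d u l (n+2) 0 j.succ.succ *
      ((tri d u l (n+2)).submatrix Fin.succ (j.succ.succ).succAbove).det = 0 := by
    apply Finset.sum_eq_zero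
    intro j _
    have h0 : tri d u l (n + 2) 0 j.succ.succ = 0 := by
      rw [tri_apply]
      have : ((j.succ.succ : Fin (n+2)) : ℕ) = (j : ℕ) + 2 := by simp [Fin.val_succ]
      rw [this]
      have h1 : ((0 : Fin (n+2)) : ℕ) = 0 := rfl
      rw [h1]
      simp only [if_neg (by omega : ¬ (0 : ℕ) = (j:ℕ)+2),
        if_neg (by omega : ¬ (0 : ℕ) + 1 = (j:ℕ)+2), if_neg (by omega : ¬ (j:ℕ)+2+1 = 0)]
    rw [h0]; ring
  rw [hz, add_zero]
  -- first term
  have e00 : tri d u l (n + 2) 0 0 = d 0 := by rw [tri_apply]; simp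
  have e01 : tri d u l (n + 2) 0 (0 : Fin (n+1)).succ = u 0 := by
    rw [tri_apply]
    norm_num
  have m0 : (tri d u l (n+2)).submatrix Fin.succ ((0 : Fin (n+2)).succAbove) =
      tri (fun k => d (k + 1)) (fun k => u (k + 1)) (fun k => l (k + 1)) (n + 1) := by
    rw [Fin.succAbove_zero, tri_sub1]
  -- second minor: expand along first column
  have m1 : ((tri d u l (n+2)).submatrix Fin.succ ((0 : Fin (n+1)).succ.succAbove)).det =
      l 0 * (tri (fun k => d (k + 2)) (fun k => u (k + 2)) (fun k => l (k + 2)) n).det := by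
    rw [Matrix.det_succ_column_zero, Fin.sum_univ_succ]
    have hz2 : ∑ i : Fin n, (-1 : ℂ) ^ ((i.succ : Fin (n+1)) : ℕ) *
        (tri d u l (n+2)).submatrix Fin.succ ((0 : Fin (n+1)).succ.succAbove) i.succ 0 *
        (((tri d u l (n+2)).submatrix Fin.succ
            ((0 : Fin (n+1)).succ.succAbove)).submatrix i.succ.succAbove Fin.succ).det = 0 := by
      apply Finset.sum_eq_zero
      intro i _
      have h0 : (tri d u l (n+2)).submatrix Fin.succ ((0 : Fin (n+1)).succ.succAbove) i.succ 0 = 0 := by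
        rw [Matrix.submatrix_apply, Fin.succ_succAbove_zero, tri_apply]
        have h1 : ((i.succ.succ : Fin (n+2)) : ℕ) = (i : ℕ) + 2 := by simp [Fin.val_succ]
        rw [h1]
        have h2 : ((0 : Fin (n+2)) : ℕ) = 0 := rfl
        rw [h2]
        simp only [if_neg (by omega : ¬ (i:ℕ)+2 = 0),
          if_neg (by omega : ¬ (i:ℕ)+2+1 = 0), if_neg (by omega : ¬ (0:ℕ)+1 = (i:ℕ)+2)]
      rw [h0]; ring
    rw [hz2, add_zero]
    have e10 : (tri d u l (n+2)).submatrix Fin.succ ((0 : Fin (n+1)).succ.succAbove)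
        (0 : Fin (n+1)) 0 = l 0 := by
      rw [Matrix.submatrix_apply, Fin.succ_succAbove_zero, tri_apply]
      norm_num
    have msub : ((tri d u l (n+2)).submatrix Fin.succ
        ((0 : Fin (n+1)).succ.succAbove)).submatrix ((0 : Fin (n+1)).succAbove) Fin.succ =
        tri (fun k => d (k + 2)) (fun k => u (k + 2)) (fun k => l (k + 2)) n := by
      rw [← tri_sub2 d u l n]
      ext i j
      simp only [Matrix.submatrix_apply, Fin.succAbove_zero, Fin.succ_succAbove_succ]
    rw [e10, msub]
    norm_num
  rw [e00, e01, m0, m1]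
  have : ((0 : Fin (n+1)).succ : Fin (n+2)).val = 1 := rfl
  rw [this, Fin.val_zero]
  ring

noncomputable def Dseq (n : ℕ) : ℕ → ℂ := fun k => if k = 0 ∨ k = n - 1 then 1 + Complex.I else 1
noncomputable def Useq (n : ℕ) : ℕ → ℂ := fun k => if k = 0 ∨ k = n - 2 then Complex.I else -Complex.I

lemma Useq_mul_self (n k : ℕ) : Useq n k * Useq n k = -1 := by
  unfold Useq
  split_ifs <;> simp [Complex.I_mul_I]

lemma aux (n : ℕ) : ∀ m : ℕ, 1 ≤ m → ∀ j : ℕ, 1 ≤ j → j + m = n →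
    (tri (fun x => Dseq n (x + j)) (fun x => Useq n (x + j)) (fun x => Useq n (x + j)) m).det =
      (1 + Complex.I) * (Nat.fib m : ℂ) + (Nat.fib (m - 1) : ℂ) := by
  intro m
  induction m using Nat.strong_induction_on with
  | _ m ih =>
    intro hm j hj hjm
    obtain _ | _ | _ | k := m
    · omega
    · -- m = 1, j = n - 1
      rw [Matrix.det_fin_one]
      have : tri (fun x => Dseq n (x + j)) (fun x => Useq n (x + j)) (fun x => Useq n (x + j)) 1
          0 0 = Dseq n (0 + j) := by rw [tri_apply]; norm_num
      rw [this]
      have : Dseq n (0 + j) = 1 + Complex.I := by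
        unfold Dseq; rw [if_pos (by omega)]
      rw [this]; norm_num
    · -- m = 2, j = n - 2
      rw [Matrix.det_fin_two]
      have h00 : tri (fun x => Dseq n (x + j)) (fun x => Useq n (x + j)) (fun x => Useq n (x + j)) 2
          0 0 = Dseq n (0 + j) := by rw [tri_apply]; norm_num
      have h11 : tri (fun x => Dseq n (x + j)) (fun x => Useq n (x + j)) (fun x => Useq n (x + j)) 2
          1 1 = Dseq n (1 + j) := by rw [tri_apply]; norm_num
      have h01 : tri (fun x => Dseq n (x + j)) (fun x => Useq n (x + j)) (fun x => Useq n (x + j)) 2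
          0 1 = Useq n (0 + j) := by rw [tri_apply]; norm_num
      have h10 : tri (fun x => Dseq n (x + j)) (fun x => Useq n (x + j)) (fun x => Useq n (x + j)) 2
          1 0 = Useq n (0 + j) := by rw [tri_apply]; norm_num
      rw [h00, h11, h01, h10]
      have e1 : Dseq n (0 + j) = 1 := by unfold Dseq; rw [if_neg (by omega)]
      have e2 : Dseq n (1 + j) = 1 + Complex.I := by unfold Dseq; rw [if_pos (by omega)]
      rw [e1, e2, Useq_mul_self]
      norm_num
    · -- m = k + 3
      rw [show k + 3 = (k + 1) + 2 from rfl, det_tri_rec]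
      have c1 : ∀ f : ℕ → ℂ, (fun x => f ((x : ℕ) + 1 + j)) = (fun x => f (x + (j + 1))) := by
        intro f; funext x; congr 1; omega
      have c2 : ∀ f : ℕ → ℂ, (fun x => f ((x : ℕ) + 2 + j)) = (fun x => f (x + (j + 2))) := by
        intro f; funext x; congr 1; omega
      simp only [c1 (Dseq n), c1 (Useq n), c2 (Dseq n), c2 (Useq n)]
      rw [ih (k + 2) (by omega) (by omega) (j + 1) (by omega) (by omega),
        ih (k + 1) (by omega) (by omega) (j + 2) (by omega) (by omega),
        Useq_mul_self]
      have e1 : Dseq n (0 + j) = 1 := by unfold Dseq; rw [if_neg (by omega)]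
      rw [e1]
      simp only [Nat.add_sub_cancel, show k + 3 - 1 = k + 2 from rfl,
        show k + 2 - 1 = k + 1 from rfl, show k + 1 - 1 = k from rfl]
      have : Nat.fib (k + 3) = Nat.fib (k + 1) + Nat.fib (k + 2) := Nat.fib_add_two
      rw [this, show Nat.fib (k + 2) = Nat.fib k + Nat.fib (k + 1) from Nat.fib_add_two]
      push_cast
      ring


lemma matAdag_eq_tri (n : ℕ) (hn : 5 ≤ n) :
    matAdag n 1 Complex.I = tri (Dseq n) (Useq n) (Useq n) n := by
  ext i j
  have hi := i.isLt
  have hj := j.isLt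
  simp only [matAdag, tri, Matrix.of_apply, Dseq, Useq]
  split_ifs <;> first | rfl | omega

/-- For `n ≥ 5`, the matrix `A†` with `a := 1`, `b := i` satisfies
`det A† = (1 + 2i)·F_n`, where `F_n` is the `n`-th Fibonacci number. -/
theorem det_matAdag_fib (n : ℕ) (hn : 5 ≤ n) :
    Matrix.det (matAdag n 1 Complex.I) = (1 + 2 * Complex.I) * (Nat.fib n : ℂ) := by
  obtain ⟨k, rfl⟩ : ∃ k, n = k + 5 := ⟨n - 5, by omega⟩
  rw [matAdag_eq_tri _ hn, show k + 5 = (k + 3) + 2 from rfl, det_tri_rec]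
  have c1 : ∀ f : ℕ → ℂ, (fun x => f ((x : ℕ) + 1)) = (fun x => f (x + 1)) := fun _ => rfl
  rw [aux (k + 5) (k + 4) (by omega) 1 (by omega) (by omega),
    aux (k + 5) (k + 3) (by omega) 2 (by omega) (by omega)]
  have e1 : Dseq (k + 5) 0 = 1 + Complex.I := by unfold Dseq; rw [if_pos (by omega)]
  rw [e1, Useq_mul_self]
  simp only [show k + 4 - 1 = k + 3 from rfl, show k + 3 - 1 = k + 2 from rfl]
  rw [show Nat.fib (k + 5) = Nat.fib (k + 3) + Nat.fib (k + 4) from Nat.fib_add_two,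
    show Nat.fib (k + 4) = Nat.fib (k + 2) + Nat.fib (k + 3) from Nat.fib_add_two]
  push_cast
  linear_combination (↑(Nat.fib (k + 2)) + ↑(Nat.fib (k + 3)) : ℂ) * Complex.I_mul_I
end

section
/- Let n ≥ 5 be an integer, a ∈ ℂ, and b ∈ ℂ with b ≠ 0, and let A† be the associated n×n tridiagonal matrix. Then det(A†) = (a+b)²·D_{n−2} − 2b²(a+b)·D_{n−3} + b⁴·D_{n−4}, where D_m = det(tridiag_m(−b, a, −b)) (with the convention D_0 = 1). -/
/-- `tridiag m p q` : the `m × m` matrix with diagonal entries `q`,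
sub- and super-diagonal entries `p`, and all other entries `0`. -/
def tridiag (m : ℕ) (p q : ℂ) : Matrix (Fin m) (Fin m) ℂ :=
  Matrix.of fun i j =>
    if (i : ℕ) = (j : ℕ) then q
    else if (i : ℕ) + 1 = (j : ℕ) ∨ (j : ℕ) + 1 = (i : ℕ) then p
    else 0

namespace DetAdagAux

open Matrix Fin

/-- The symmetrized matrix: same as `matAdag` but with all off-diagonal entries `-b`. -/
def Cmat (n : ℕ) (a b : ℂ) : Matrix (Fin n) (Fin n) ℂ :=
  Matrix.of fun i j =>
    if (i : ℕ) = (j : ℕ) then (if (i : ℕ) = 0 ∨ (i : ℕ) = n - 1 then a + b else a)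
    else if (i : ℕ) + 1 = (j : ℕ) ∨ (j : ℕ) + 1 = (i : ℕ) then -b
    else 0

lemma tridiag_sub_succ (k : ℕ) (p q : ℂ) :
    (tridiag (k+1) p q).submatrix Fin.succ Fin.succ = tridiag k p q := by
  ext i j
  simp only [tridiag, submatrix_apply, of_apply, Fin.val_succ]
  exact if_congr (by omega) rfl (if_congr (by omega) rfl rfl)

lemma tridiag_sub_cast (k : ℕ) (p q : ℂ) :
    (tridiag (k+1) p q).submatrix Fin.castSucc Fin.castSucc = tridiag k p q := by
  ext i j
  simp only [tridiag, submatrix_apply, of_apply, Fin.coe_castSucc]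

lemma det_single_first {k : ℕ} (M : Matrix (Fin (k+1)) (Fin (k+1)) ℂ) (c : ℂ) :
    Matrix.det (M.updateRow 0 (Pi.single 0 c)) = c * Matrix.det (M.submatrix Fin.succ Fin.succ) := by
  rw [det_succ_row_zero, Fin.sum_univ_succ]
  have h1 : ∀ j : Fin k, (M.updateRow 0 (Pi.single 0 c)) 0 j.succ = 0 := by
    intro j
    simp [Pi.single_apply, Fin.ext_iff]
  have h2 : (M.updateRow 0 (Pi.single 0 c)).submatrix Fin.succ Fin.succ
      = M.submatrix Fin.succ Fin.succ := by
    ext i j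
    simp [Matrix.updateRow_ne (Fin.succ_ne_zero i)]
  simp [h1, Pi.single_apply, h2]

lemma det_single_last {k : ℕ} (M : Matrix (Fin (k+1)) (Fin (k+1)) ℂ) (c : ℂ) :
    Matrix.det (M.updateRow (Fin.last k) (Pi.single (Fin.last k) c)) =
      c * Matrix.det (M.submatrix Fin.castSucc Fin.castSucc) := by
  rw [det_succ_row _ (Fin.last k), Fin.sum_univ_castSucc]
  have h1 : ∀ j : Fin k,
      (M.updateRow (Fin.last k) (Pi.single (Fin.last k) c)) (Fin.last k) j.castSucc = 0 := by
    intro j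
    have : j.castSucc ≠ Fin.last k := Fin.ne_of_lt (Fin.castSucc_lt_last j)
    simp [Pi.single_apply, this]
  have h2 : (M.updateRow (Fin.last k) (Pi.single (Fin.last k) c)).submatrix
      Fin.castSucc Fin.castSucc = M.submatrix Fin.castSucc Fin.castSucc := by
    ext i j
    have : i.castSucc ≠ Fin.last k := Fin.ne_of_lt (Fin.castSucc_lt_last i)
    simp [Matrix.updateRow_ne this]
  have h3 : ((-1 : ℂ)) ^ ((Fin.last k : ℕ) + (Fin.last k : ℕ)) = 1 :=
    Even.neg_one_pow ⟨k, rfl⟩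
  simp [h1, h2, h3, Pi.single_apply]

lemma succAbove_one_val {k : ℕ} (x : Fin (k+1)) :
    (((1 : Fin (k+2)).succAbove x) : ℕ) = if (x:ℕ) = 0 then 0 else (x:ℕ)+1 := by
  rcases Nat.eq_zero_or_pos x.val with h | h
  · rw [Fin.succAbove_of_castSucc_lt]
    · simp [h]
    · simp [Fin.lt_def, h]
  · rw [Fin.succAbove_of_le_castSucc]
    · simp only [Fin.val_succ]
      rw [if_neg (by omega)]
    · rw [Fin.le_def]
      simp; omega

lemma tridiag_rec (k : ℕ) (p q : ℂ) :
    Matrix.det (tridiag (k+2) p q) =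
      q * Matrix.det (tridiag (k+1) p q) - p^2 * Matrix.det (tridiag k p q) := by
  have hsub1 : (tridiag (k+2) p q).submatrix Fin.succ Fin.succ = tridiag (k+1) p q :=
    tridiag_sub_succ (k+1) p q
  have ha0 : (((1 : Fin (k+2)).succAbove 0) : ℕ) = 0 := by rw [succAbove_one_val]; simp
  have haS : ∀ x : Fin k, (((1 : Fin (k+2)).succAbove x.succ) : ℕ) = (x:ℕ)+2 := by
    intro x
    rw [succAbove_one_val]
    simp
  have hNdet : ((tridiag (k+2) p q).submatrix Fin.succ ((1 : Fin (k+2)).succAbove)).det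
      = p * Matrix.det (tridiag k p q) := by
    rw [det_succ_column_zero, Fin.sum_univ_succ]
    have hc : ∀ x : Fin k,
        ((tridiag (k+2) p q).submatrix Fin.succ ((1 : Fin (k+2)).succAbove)) x.succ 0 = 0 := by
      intro x
      simp [tridiag, ha0]
    have hN00 : ((tridiag (k+2) p q).submatrix Fin.succ ((1 : Fin (k+2)).succAbove)) 0 0 = p := by
      simp [tridiag, ha0]
    have hmin : ((tridiag (k+2) p q).submatrix Fin.succ ((1 : Fin (k+2)).succAbove)).submatrix
        Fin.succ Fin.succ = tridiag k p q := by
      ext i j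
      simp only [tridiag, submatrix_apply, of_apply, Fin.val_succ, haS]
      exact if_congr (by omega) rfl (if_congr (by omega) rfl rfl)
    have e10 : tridiag (k+2) p q 1 0 = p := by simp [tridiag]
    have hz : ∀ x : Fin k, tridiag (k+2) p q x.succ.succ 0 = 0 := by
      intro x; simp [tridiag]
    simp [hc, hN00, hmin, e10, hz]
  rw [det_succ_row_zero, Fin.sum_univ_succ, Fin.sum_univ_succ]
  have h0 : ∀ j : Fin k, tridiag (k+2) p q 0 j.succ.succ = 0 := by
    intro j
    simp [tridiag]
  have e0 : tridiag (k+2) p q 0 0 = q := by simp [tridiag]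
  have e1 : tridiag (k+2) p q 0 1 = p := by simp [tridiag]
  simp only [Fin.succ_zero_eq_one, Fin.succAbove_zero, Fin.val_zero, Fin.val_one, pow_zero,
    pow_one, h0, mul_zero, zero_mul, Finset.sum_const_zero, add_zero, e0, e1, hsub1, hNdet]
  ring

lemma conj (m : ℕ) (a b : ℂ) :
    matAdag (m+5) a b =
      Matrix.diagonal (fun i : Fin (m+5) => if (i:ℕ) = 0 ∨ (i:ℕ) = m+4 then (-1:ℂ) else 1) *
        Cmat (m+5) a b *
      Matrix.diagonal (fun i : Fin (m+5) => if (i:ℕ) = 0 ∨ (i:ℕ) = m+4 then (-1:ℂ) else 1) := by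
  ext i j
  have hi := i.isLt
  have hj := j.isLt
  simp only [matAdag, Cmat, Matrix.of_apply, Matrix.mul_diagonal, Matrix.diagonal_mul]
  split_ifs <;> first | ring1 | (exfalso; omega)

lemma updateRow_comm' {n' : Type*} [DecidableEq n'] (M : Matrix n' n' ℂ) {i j : n'}
    (h : i ≠ j) (u v : n' → ℂ) :
    (M.updateRow i u).updateRow j v = (M.updateRow j v).updateRow i u := by
  ext r c
  rcases eq_or_ne r i with ri | ri <;> rcases eq_or_ne r j with rj | rj
  · exact absurd (ri.symm.trans rj) h
  · simp [Matrix.updateRow_apply, ri, rj, h, Ne.symm h]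
  · simp [Matrix.updateRow_apply, ri, rj, h, Ne.symm h]
  · simp [Matrix.updateRow_apply, ri, rj, h, Ne.symm h]

lemma Cmat_eq (m : ℕ) (a b : ℂ) :
    Cmat (m+5) a b =
      ((tridiag (m+5) (-b) a).updateRow (Fin.last (m+4))
          ((tridiag (m+5) (-b) a) (Fin.last (m+4)) + Pi.single (Fin.last (m+4)) b)).updateRow 0
        ((tridiag (m+5) (-b) a) 0 + Pi.single 0 b) := by
  ext i j
  have hi := i.isLt
  have hj := j.isLt
  simp only [Cmat, tridiag, Matrix.updateRow_apply, Matrix.of_apply, Pi.add_apply,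
    Pi.single_apply, Fin.ext_iff, Fin.val_last, Fin.val_zero]
  split_ifs <;> first | ring1 | (exfalso; simp -failIfUnchanged only [or_false, false_or] at *; omega)

lemma det_Cmat (m : ℕ) (a b : ℂ) :
    Matrix.det (Cmat (m+5) a b) =
      Matrix.det (tridiag (m+5) (-b) a) + 2 * b * Matrix.det (tridiag (m+4) (-b) a) +
        b^2 * Matrix.det (tridiag (m+3) (-b) a) := by
  set T : Matrix (Fin (m+5)) (Fin (m+5)) ℂ := tridiag (m+5) (-b) a with hT
  have h0l : (0 : Fin (m+5)) ≠ Fin.last (m+4) := by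
    simp [Fin.ext_iff]
  have hsubc : T.submatrix Fin.castSucc Fin.castSucc = tridiag (m+4) (-b) a :=
    tridiag_sub_cast (m+4) (-b) a
  have hsubs : T.submatrix Fin.succ Fin.succ = tridiag (m+4) (-b) a :=
    tridiag_sub_succ (m+4) (-b) a
  rw [Cmat_eq, ← hT]
  rw [Matrix.det_updateRow_add]
  have t1 : ((T.updateRow (Fin.last (m+4))
        (T (Fin.last (m+4)) + Pi.single (Fin.last (m+4)) b)).updateRow 0 (T 0))
      = T.updateRow (Fin.last (m+4)) (T (Fin.last (m+4)) + Pi.single (Fin.last (m+4)) b) := by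
    conv_lhs =>
      rw [show T 0 = (T.updateRow (Fin.last (m+4))
        (T (Fin.last (m+4)) + Pi.single (Fin.last (m+4)) b)) 0 from
        (Matrix.updateRow_ne h0l).symm]
    exact Matrix.updateRow_eq_self _ _
  rw [t1, Matrix.det_updateRow_add, Matrix.updateRow_eq_self,
    det_single_last T b, hsubc]
  rw [updateRow_comm' _ (Ne.symm h0l)]
  rw [Matrix.det_updateRow_add]
  have t2 : ((T.updateRow 0 (Pi.single 0 b)).updateRow (Fin.last (m+4)) (T (Fin.last (m+4))))
      = T.updateRow 0 (Pi.single 0 b) := by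
    conv_lhs =>
      rw [show T (Fin.last (m+4)) =
        (T.updateRow 0 (Pi.single 0 b)) (Fin.last (m+4)) from
        (Matrix.updateRow_ne (Ne.symm h0l)).symm]
    exact Matrix.updateRow_eq_self _ _
  rw [t2, det_single_first T b, hsubs]
  rw [det_single_last (T.updateRow 0 (Pi.single 0 b)) b]
  have t5 : (T.updateRow 0 (Pi.single 0 b)).submatrix Fin.castSucc Fin.castSucc
      = (tridiag (m+4) (-b) a).updateRow 0 (Pi.single 0 b) := by
    ext i j
    simp only [hT, tridiag, submatrix_apply, Matrix.updateRow_apply, Pi.single_apply,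
      Fin.ext_iff, Fin.coe_castSucc, Fin.val_zero, Matrix.of_apply]
  rw [t5, det_single_first (tridiag (m+4) (-b) a) b,
    (tridiag_sub_succ (m+3) (-b) a :
      (tridiag (m+4) (-b) a).submatrix Fin.succ Fin.succ = tridiag (m+3) (-b) a)]
  ring

end DetAdagAux

/-- For `n ≥ 5`, `a b : ℂ` with `b ≠ 0`,
`det A† = (a+b)²·D_{n-2} - 2b²(a+b)·D_{n-3} + b⁴·D_{n-4}`,
where `D_m = det(tridiag_m(-b, a, -b))`. -/
theorem det_matAdag_laplace (n : ℕ) (hn : 5 ≤ n) (a b : ℂ) (hb : b ≠ 0) :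
    Matrix.det (matAdag n a b) =
      (a + b) ^ 2 * Matrix.det (tridiag (n - 2) (-b) a) -
        2 * b ^ 2 * (a + b) * Matrix.det (tridiag (n - 3) (-b) a) +
        b ^ 4 * Matrix.det (tridiag (n - 4) (-b) a) := by
  obtain ⟨m, rfl⟩ : ∃ m, n = m + 5 := ⟨n - 5, by omega⟩
  have e2 : m + 5 - 2 = m + 3 := by omega
  have e3 : m + 5 - 3 = m + 2 := by omega
  have e4 : m + 5 - 4 = m + 1 := by omega
  rw [e2, e3, e4]
  rw [DetAdagAux.conj m a b, Matrix.det_mul, Matrix.det_mul]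
  have hD2 : Matrix.det (Matrix.diagonal
        (fun i : Fin (m+5) => if (i:ℕ) = 0 ∨ (i:ℕ) = m+4 then (-1:ℂ) else 1)) *
      Matrix.det (Matrix.diagonal
        (fun i : Fin (m+5) => if (i:ℕ) = 0 ∨ (i:ℕ) = m+4 then (-1:ℂ) else 1)) = 1 := by
    rw [Matrix.det_diagonal, ← Finset.prod_mul_distrib]
    apply Finset.prod_eq_one
    intro i _
    by_cases h : (i:ℕ) = 0 ∨ (i:ℕ) = m+4 <;> simp only [h] <;> norm_num
  have key : Matrix.det (Matrix.diagonal
        (fun i : Fin (m+5) => if (i:ℕ) = 0 ∨ (i:ℕ) = m+4 then (-1:ℂ) else 1)) *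
      Matrix.det (DetAdagAux.Cmat (m+5) a b) *
      Matrix.det (Matrix.diagonal
        (fun i : Fin (m+5) => if (i:ℕ) = 0 ∨ (i:ℕ) = m+4 then (-1:ℂ) else 1)) =
      Matrix.det (DetAdagAux.Cmat (m+5) a b) := by
    rw [mul_comm, ← mul_assoc, hD2, one_mul]
  rw [key, DetAdagAux.det_Cmat]
  have r5 : Matrix.det (tridiag (m+5) (-b) a) =
      a * Matrix.det (tridiag (m+4) (-b) a) - (-b)^2 * Matrix.det (tridiag (m+3) (-b) a) :=
    DetAdagAux.tridiag_rec (m+3) (-b) a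
  have r4 : Matrix.det (tridiag (m+4) (-b) a) =
      a * Matrix.det (tridiag (m+3) (-b) a) - (-b)^2 * Matrix.det (tridiag (m+2) (-b) a) :=
    DetAdagAux.tridiag_rec (m+2) (-b) a
  have r3 : Matrix.det (tridiag (m+3) (-b) a) =
      a * Matrix.det (tridiag (m+2) (-b) a) - (-b)^2 * Matrix.det (tridiag (m+1) (-b) a) :=
    DetAdagAux.tridiag_rec (m+1) (-b) a
  rw [r5, r4, r3]
  ring
end

section
/- For every integer n ≥ 1, the n-th Fibonacci number has the complex factorization F_n = ∏_{k=1}^{n−1} (1 − 2i·cos(kπ/n)), where i = √−1. -/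
open Complex Finset

/-- For `n ≥ 1`, the `n`-th Fibonacci number has the complex factorization
`F_n = ∏_{k=1}^{n-1} (1 - 2i·cos(kπ/n))`. -/
theorem fib_complex_factorization (n : ℕ) (hn : 1 ≤ n) :
    (Nat.fib n : ℂ) =
      ∏ k ∈ Finset.Icc 1 (n - 1),
        (1 - 2 * Complex.I * (Real.cos ((k : ℝ) * Real.pi / (n : ℝ)) : ℂ)) := by
  obtain ⟨m, rfl⟩ : ∃ m, n = m + 1 := ⟨n - 1, by omega⟩
  set n := m + 1 with hndef
  have hn0 : (n : ℂ) ≠ 0 := Nat.cast_ne_zero.mpr (by omega)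
  -- golden ratio constants
  set s : ℂ := ((Real.sqrt 5 : ℝ) : ℂ) with hsdef
  set p : ℂ := ((Real.goldenRatio : ℝ) : ℂ) with hpdef
  set c : ℂ := ((Real.goldenConj : ℝ) : ℂ) with hcdef
  have hs2 : s ^ 2 = 5 := by
    rw [hsdef, ← Complex.ofReal_pow, Real.sq_sqrt (by norm_num)]; norm_num
  have hs0 : s ≠ 0 := by
    rw [hsdef]
    simpa using Real.sqrt_ne_zero'.2 (by norm_num : (0:ℝ) < 5)
  have hcp : c * p = -1 := by
    rw [hcdef, hpdef, ← Complex.ofReal_mul, Real.goldenConj_mul_goldenRatio]; norm_num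
  have hsum : p + c = 1 := by
    rw [hcdef, hpdef, ← Complex.ofReal_add, Real.goldenRatio_add_goldenConj]; norm_num
  have hc2 : c ^ 2 = c + 1 := by
    rw [hcdef, ← Complex.ofReal_pow, Real.goldenConj_sq]; push_cast; ring
  have hsc : c - p = -s := by
    rw [hcdef, hpdef, hsdef, ← Complex.ofReal_sub]
    rw [show Real.goldenConj - Real.goldenRatio = -(Real.goldenRatio - Real.goldenConj) by ring]
    rw [Real.goldenRatio_sub_goldenConj]; push_cast; ring
  have hfib : (Nat.fib n : ℂ) * s = p ^ n - c ^ n := by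
    have h := Real.coe_fib_eq n
    have h5 : (Real.sqrt 5) ≠ 0 := by
      simpa using Real.sqrt_ne_zero'.2 (by norm_num : (0:ℝ) < 5)
    rw [eq_div_iff h5] at h
    calc (Nat.fib n : ℂ) * s = ((Nat.fib n * Real.sqrt 5 : ℝ) : ℂ) := by push_cast; ring
    _ = ((Real.goldenRatio ^ n - Real.goldenConj ^ n : ℝ) : ℂ) := by rw [h]
    _ = p ^ n - c ^ n := by rw [hpdef, hcdef]; push_cast; ring
  -- root of unity setup
  set ω : ℂ := Complex.exp (Real.pi * Complex.I / n) with hωdef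
  have hprim : IsPrimitiveRoot ω (2 * n) := by
    have h := Complex.isPrimitiveRoot_exp (2 * n) (by omega)
    have harg : 2 * Real.pi * Complex.I / ((2 * n : ℕ) : ℂ) = Real.pi * Complex.I / n := by
      rw [show ((2 * n : ℕ) : ℂ) = 2 * (n : ℂ) by push_cast; ring,
        show (2 : ℂ) * Real.pi * Complex.I = 2 * (Real.pi * Complex.I) by ring,
        mul_div_mul_left _ _ (two_ne_zero)]
    rwa [harg] at h
  have hω2n : ω ^ (2 * n) = 1 := hprim.pow_eq_one
  have hωn : ω ^ n = -1 := by
    rw [hωdef, ← Complex.exp_nat_mul]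
    rw [show (n : ℂ) * (Real.pi * Complex.I / n) = Real.pi * Complex.I by field_simp]
    exact Complex.exp_pi_mul_I
  have hroots : ∀ z : ℂ, z ^ (2 * n) - 1 = ∏ k ∈ range (2 * n), (z - ω ^ k) := by
    intro z
    have himg : Polynomial.nthRootsFinset (2 * n) (1 : ℂ) = (range (2 * n)).image (ω ^ ·) := by
      symm
      apply Finset.eq_of_subset_of_card_le
      · intro x hx
        simp only [mem_image, mem_range] at hx
        obtain ⟨k, hk, rfl⟩ := hx
        exact (Polynomial.mem_nthRootsFinset (by omega) (1 : ℂ)).2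
          (by rw [← pow_mul, mul_comm, pow_mul, hω2n, one_pow])
      · rw [hprim.card_nthRootsFinset, Finset.card_image_of_injOn fun a ha b hb h =>
          hprim.pow_inj (mem_range.1 ha) (mem_range.1 hb) h, Finset.card_range]
    have h := congrArg (Polynomial.eval z)
      (Polynomial.X_pow_sub_one_eq_prod (R := ℂ) (n := 2 * n) (by omega) hprim)
    rw [himg] at h
    rw [Finset.prod_image (fun a ha b hb h => hprim.pow_inj (mem_range.1 ha) (mem_range.1 hb) h)]
      at h
    simpa [Polynomial.eval_prod] using h
  set z : ℂ := -Complex.I * c with hzdef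
  have hcard : (Icc 1 m).card = m := by rw [Nat.card_Icc]; omega
  have hI : Complex.I * Complex.I = -1 := Complex.I_mul_I
  -- notation for the subproducts
  set P : ℂ := ∏ k ∈ Icc 1 m, (1 - 2 * Complex.I * (Real.cos ((k : ℝ) * Real.pi / (n : ℝ)) : ℂ))
    with hPdef
  set W : ℂ := ∏ k ∈ Icc 1 m, ω ^ k with hWdef
  set A : ℂ := ∏ k ∈ Icc 1 m, (ω ^ k + Complex.I * c) with hAdef
  set B : ℂ := ∏ k ∈ Icc 1 m, (ω ^ k + Complex.I * p) with hBdef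
  -- exponential facts per k
  have hexp : ∀ k : ℕ, Complex.exp (((k : ℝ) * Real.pi / (n : ℝ) : ℝ) * Complex.I) = ω ^ k := by
    intro k
    rw [hωdef, ← Complex.exp_nat_mul]
    congr 1
    push_cast
    field_simp
  have hexp' : ∀ k : ℕ, ω ^ k * Complex.exp (-(((k : ℝ) * Real.pi / (n : ℝ) : ℝ)) * Complex.I)
      = 1 := by
    intro k
    rw [← hexp k, ← Complex.exp_add]
    simp [← Complex.exp_add, ← add_mul]
  -- per-term factorization
  have hterm : ∀ k ∈ Icc 1 m,
      ω ^ k * (1 - 2 * Complex.I * (Real.cos ((k : ℝ) * Real.pi / (n : ℝ)) : ℂ))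
        = -Complex.I * ((ω ^ k + Complex.I * c) * (ω ^ k + Complex.I * p)) := by
    intro k _
    have h2c : 2 * (Real.cos ((k : ℝ) * Real.pi / (n : ℝ)) : ℂ)
        = Complex.exp (((k : ℝ) * Real.pi / (n : ℝ) : ℝ) * Complex.I)
          + Complex.exp (-(((k : ℝ) * Real.pi / (n : ℝ) : ℝ)) * Complex.I) := by
      rw [Complex.ofReal_cos]
      exact Complex.two_cos _
    have he1 := hexp k
    have he2 := hexp' k
    rw [he1] at h2c
    -- ω^k * (1 - I*(ω^k + e₂)) with ω^k * e₂ = 1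
    linear_combination (-(Complex.I) * ω ^ k) * h2c + (-(Complex.I)) * he2
      + ((p + c) * ω ^ k + Complex.I * c * p) * hI + (-(Complex.I)) * hcp
      + (-(ω ^ k)) * hsum

  -- Gauss sum for W * W
  have hsum_eq : ∑ k ∈ Icc 1 m, k = ∑ k ∈ range (m + 1), k := by
    rw [Finset.range_eq_Ico, Finset.sum_eq_sum_Ico_succ_bot (by omega : 0 < m + 1)]
    simp [Finset.Ico_add_one_right_eq_Icc]
  have hW2 : W * W = (-1 : ℂ) ^ m := by
    rw [hWdef, Finset.prod_pow_eq_pow_sum, ← pow_add]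
    have g : (∑ k ∈ range (m + 1), k) * 2 = (m + 1) * m := by
      simpa using Finset.sum_range_id_mul_two (m + 1)
    have hsum2 : (∑ k ∈ Icc 1 m, k) + (∑ k ∈ Icc 1 m, k) = n * m := by
      rw [hsum_eq, hndef]; omega
    rw [hsum2, pow_mul, hωn]
  -- E1
  have hE1 : W * P = (-Complex.I) ^ m * (A * B) := by
    calc W * P = ∏ k ∈ Icc 1 m,
          (ω ^ k * (1 - 2 * Complex.I * (Real.cos ((k : ℝ) * Real.pi / (n : ℝ)) : ℂ))) := by
          rw [Finset.prod_mul_distrib, hWdef, hPdef]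
      _ = ∏ k ∈ Icc 1 m,
          (-Complex.I * ((ω ^ k + Complex.I * c) * (ω ^ k + Complex.I * p))) :=
          Finset.prod_congr rfl hterm
      _ = (-Complex.I) ^ m * (A * B) := by
          rw [Finset.prod_mul_distrib, Finset.prod_const, hcard,
            Finset.prod_mul_distrib, hAdef, hBdef]
  -- subproducts at z
  set Q1 : ℂ := ∏ k ∈ Icc 1 m, (z - ω ^ k) with hQ1def
  set Q2 : ℂ := ∏ k ∈ Icc 1 m, (z - ω ^ (2 * n - k)) with hQ2def
  have hre : ∏ k ∈ Finset.Ico (n + 1) (2 * n), (z - ω ^ k) = Q2 := by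
    rw [hQ2def]
    apply Finset.prod_nbij' (fun k => 2 * n - k) (fun k => 2 * n - k)
    · intro a ha; simp only [Finset.mem_Ico] at ha; simp only [Finset.mem_Icc]; omega
    · intro a ha; simp only [Finset.mem_Icc] at ha; simp only [Finset.mem_Ico]; omega
    · intro a ha; simp only [Finset.mem_Ico] at ha; omega
    · intro a ha; simp only [Finset.mem_Icc] at ha; omega
    · intro a ha; simp only [Finset.mem_Ico] at ha
      congr 2
      omega
  have hQsplit : ∏ k ∈ range (2 * n), (z - ω ^ k) = (z - 1) * ((z + 1) * (Q1 * Q2)) := by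
    rw [Finset.range_eq_Ico,
      ← Finset.prod_Ico_consecutive (fun k => z - ω ^ k) (Nat.zero_le n)
        (by omega : n ≤ 2 * n),
      Finset.prod_eq_prod_Ico_succ_bot (by omega : 0 < n),
      Finset.prod_eq_prod_Ico_succ_bot (by omega : n < 2 * n)]
    rw [pow_zero, hωn, sub_neg_eq_add]
    have h1 : Finset.Ico 1 n = Finset.Icc 1 m := by rw [hndef, Finset.Ico_add_one_right_eq_Icc]
    rw [h1, hre, ← hQ1def]
    ring
  have e1 : z ^ (2 * n) - 1 = (z - 1) * ((z + 1) * (Q1 * Q2)) := by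
    rw [hroots z, hQsplit]
  -- Q1 relation
  have hA' : Q1 * (-1 : ℂ) ^ m = A := by
    rw [hQ1def, hAdef,
      show ((-1 : ℂ)) ^ m = ∏ _k ∈ Icc 1 m, (-1 : ℂ) by rw [Finset.prod_const, hcard],
      ← Finset.prod_mul_distrib]
    exact Finset.prod_congr rfl fun k _ => by rw [hzdef]; ring
  -- Q2 relation
  have hC : Q2 * ((Complex.I * p) ^ m * W) = (-1 : ℂ) ^ m * B := by
    have hCterm : ∀ k ∈ Icc 1 m,
        (z - ω ^ (2 * n - k)) * (Complex.I * p * ω ^ k)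
          = -1 * (ω ^ k + Complex.I * p) := by
      intro k hk
      simp only [Finset.mem_Icc] at hk
      have hk1 : ω ^ (2 * n - k) * ω ^ k = 1 := by
        rw [← pow_add, show 2 * n - k + k = 2 * n by omega, hω2n]
      rw [hzdef]
      linear_combination (-(Complex.I) * p) * hk1 + (-(c * p * ω ^ k)) * hI
        + (ω ^ k) * hcp
    calc Q2 * ((Complex.I * p) ^ m * W)
        = ∏ k ∈ Icc 1 m, ((z - ω ^ (2 * n - k)) * (Complex.I * p * ω ^ k)) := by
          rw [Finset.prod_mul_distrib, Finset.prod_mul_distrib, Finset.prod_const, hcard,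
            hQ2def, hWdef]
      _ = ∏ k ∈ Icc 1 m, (-1 * (ω ^ k + Complex.I * p)) := Finset.prod_congr rfl hCterm
      _ = (-1 : ℂ) ^ m * B := by
          rw [Finset.prod_mul_distrib, Finset.prod_const, hcard, hBdef]
  -- star equation
  have hstar : (z ^ 2 - 1) * (A * B) = (z ^ (2 * n) - 1) * ((Complex.I * p) ^ m * W) := by
    linear_combination (-((Complex.I * p) ^ m) * W) * e1
      + (-(z - 1) * (z + 1) * Q1) * hC + (-(z - 1) * (z + 1) * B) * hA'
  -- auxiliary power facts
  have hm1 : (-1 : ℂ) ^ m * (-1 : ℂ) ^ m = 1 := by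
    rw [← mul_pow]; norm_num
  have hB2 : (Complex.I * p) ^ m * (-Complex.I) ^ m = p ^ m := by
    rw [← mul_pow, show Complex.I * p * -Complex.I = p from by linear_combination (-p) * hI]
  -- master equation E7
  have hE7 : (z ^ 2 - 1) * P = (z ^ (2 * n) - 1) * p ^ m := by
    linear_combination
      (-((z ^ 2 - 1) * P - (z ^ (2 * n) - 1) * p ^ m)) * hm1
      + ((-1 : ℂ) ^ m * W * (z ^ 2 - 1)) * hE1
      + ((-1 : ℂ) ^ m * (-((z ^ 2 - 1) * P)
          + (z ^ (2 * n) - 1) * ((Complex.I * p) ^ m * (-Complex.I) ^ m))) * hW2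
      + ((-1 : ℂ) ^ m * W * (-Complex.I) ^ m) * hstar
      + ((z ^ (2 * n) - 1) * ((-1 : ℂ) ^ m * (-1 : ℂ) ^ m)) * hB2
  -- substitute z
  have hz2 : z ^ 2 = -(c ^ 2) := by
    rw [hzdef]; linear_combination (c ^ 2) * hI
  have hzN : z ^ (2 * n) = (z ^ 2) ^ n := by rw [← pow_mul]
  rw [hzN, hz2] at hE7
  have hD : -(c ^ 2) - 1 = s * c := by
    linear_combination (-1 : ℂ) * hcp + (-c) * hsc
  rw [hD] at hE7
  have hps : p ^ n = p ^ m * p := pow_succ p m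
  have hpow : (-(c ^ 2)) ^ n * p ^ n = c ^ n := by
    rw [← mul_pow, show -(c ^ 2) * p = c from by linear_combination (-c) * hcp]
  have hfinal : s * P = p ^ n - c ^ n := by
    linear_combination (-p) * hE7 + ((-(c ^ 2)) ^ n - 1) * hps + (-1 : ℂ) * hpow
      + (s * P) * hcp
  have hgoal : (Nat.fib n : ℂ) = P := by
    apply mul_left_cancel₀ hs0
    linear_combination hfib - hfinal
  have hIcc : Finset.Icc 1 (n - 1) = Finset.Icc 1 m := by
    rw [hndef]
    norm_num
  rw [hIcc]
  exact hgoal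
end
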